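/- arXiv:1307.2117 — 2 statements merged into one kernel-verified Lean document; each statement's English description precedes it below -/
import Mathlib

section
/- (Noiseless recovery under RIP.) There exists a constant C₀ > 0, depending only on δ_{2k}, with the following property. Let Φ be an n × N real matrix satisfying the Restricted Isometry Property of order 2k with constant δ_{2k} < √2 − 1, let x ∈ ℝ^N, and let y = Φx. Then any solution x* of the ℓ₁-minimization problem min ‖z‖₁ subject to Φz = y satisfies ‖x* − x‖₁ ≤ C₀ ‖x − x_{(k)}‖₁ and ‖x* − x‖₂ ≤ C₀ k^{−1/2} ‖x − x_{(k)}‖₁, where x_{(k)} is obtained from x by setting all but the k largest-in-magnitude entries to zero. In particular, if x is k-sparse, the recovery is exact: x* = x. -/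
set_option maxHeartbeats 1000000

open Matrix

/-- The ℓ¹ norm on `ℝ^N`. -/
noncomputable def l1norm {N : ℕ} (x : Fin N → ℝ) : ℝ := ∑ i, |x i|

/-- The ℓ² norm on `ℝ^N`. -/
noncomputable def l2norm {N : ℕ} (x : Fin N → ℝ) : ℝ := Real.sqrt (∑ i, x i ^ 2)

/-- A vector is `k`-sparse if it has at most `k` nonzero entries. -/
def Sparse {N : ℕ} (k : ℕ) (x : Fin N → ℝ) : Prop := {i | x i ≠ 0}.ncard ≤ k

/-- The Restricted Isometry Property of order `m` with constant `δ`. -/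
def RIP {n N : ℕ} (Φ : Matrix (Fin n) (Fin N) ℝ) (m : ℕ) (δ : ℝ) : Prop :=
  ∀ x : Fin N → ℝ, Sparse m x →
    (1 - δ) * (∑ i, x i ^ 2) ≤ ∑ i, (Φ.mulVec x) i ^ 2 ∧
    ∑ i, (Φ.mulVec x) i ^ 2 ≤ (1 + δ) * (∑ i, x i ^ 2)

/-- `xk` is obtained from `x` by setting all but the `k` largest-in-magnitude entries to zero. -/
def IsBestKTerm {N : ℕ} (k : ℕ) (x xk : Fin N → ℝ) : Prop :=
  ∃ S : Finset (Fin N), S.card = min k N ∧ (∀ i ∈ S, xk i = x i) ∧ (∀ i ∉ S, xk i = 0) ∧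
    ∀ i ∈ S, ∀ j ∉ S, |x j| ≤ |x i|

namespace CSRec
open Finset

lemma le_of_sq_le_sq' {a b : ℝ} (ha : 0 ≤ a) (hb : 0 ≤ b) (h : a ^ 2 ≤ b ^ 2) : a ≤ b := by
  nlinarith

lemma l2norm_eq_norm {N : ℕ} (x : Fin N → ℝ) :
    l2norm x = ‖WithLp.toLp 2 x‖ := by
  rw [EuclideanSpace.norm_eq]
  simp [l2norm, Real.norm_eq_abs, sq_abs]

lemma l2norm_nonneg {N : ℕ} (x : Fin N → ℝ) : 0 ≤ l2norm x := Real.sqrt_nonneg _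

lemma l2norm_sq {N : ℕ} (x : Fin N → ℝ) : (l2norm x) ^ 2 = ∑ i, x i ^ 2 := by
  rw [l2norm, Real.sq_sqrt]
  positivity

lemma l2norm_add_le {N : ℕ} (u v : Fin N → ℝ) : l2norm (u + v) ≤ l2norm u + l2norm v := by
  rw [l2norm_eq_norm, l2norm_eq_norm, l2norm_eq_norm]
  exact norm_add_le (WithLp.toLp 2 u) (WithLp.toLp 2 v)

lemma l2norm_sum_le {N : ℕ} {ι : Type*} (s : Finset ι) (f : ι → Fin N → ℝ) :
    l2norm (∑ j ∈ s, f j) ≤ ∑ j ∈ s, l2norm (f j) := by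
  rw [l2norm_eq_norm]
  calc ‖WithLp.toLp 2 (∑ j ∈ s, f j)‖
      = ‖∑ j ∈ s, WithLp.toLp 2 (f j)‖ := by rw [WithLp.toLp_sum]
    _ ≤ ∑ j ∈ s, ‖WithLp.toLp 2 (f j)‖ := norm_sum_le _ _
    _ = ∑ j ∈ s, l2norm (f j) := by simp [l2norm_eq_norm]

lemma sum_sq_eq_zero {N : ℕ} {u : Fin N → ℝ} (h : ∑ i, u i ^ 2 = 0) : u = 0 := by
  funext i
  have := (Finset.sum_eq_zero_iff_of_nonneg (fun i _ => sq_nonneg (u i))).mp h i (mem_univ i)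
  exact pow_eq_zero_iff (two_ne_zero) |>.mp this

lemma sparse_of_card_le {N k : ℕ} {u : Fin N → ℝ} {s : Finset (Fin N)} (hs : s.card ≤ k)
    (h : ∀ i, u i ≠ 0 → i ∈ s) : Sparse k u := by
  refine le_trans ?_ hs
  rw [← Set.ncard_coe_finset s]
  exact Set.ncard_le_ncard (fun i hi => h i hi) (Set.toFinite _)

lemma sparse_add2 {N k : ℕ} {u v : Fin N → ℝ} (hu : Sparse k u) (hv : Sparse k v) :
    Sparse (2 * k) (u + v) := by
  have : {i | (u + v) i ≠ 0} ⊆ {i | u i ≠ 0} ∪ {i | v i ≠ 0} := by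
    intro i hi
    by_contra hc
    simp only [Set.mem_union, Set.mem_setOf_eq, not_or, not_not] at hc
    exact hi (by simp [hc.1, hc.2])
  calc {i | (u + v) i ≠ 0}.ncard ≤ ({i | u i ≠ 0} ∪ {i | v i ≠ 0}).ncard :=
        Set.ncard_le_ncard this (Set.toFinite _)
    _ ≤ {i | u i ≠ 0}.ncard + {i | v i ≠ 0}.ncard := Set.ncard_union_le _ _
    _ ≤ 2 * k := by unfold Sparse at hu hv; omega

lemma sparse_smul {N k : ℕ} (c : ℝ) {u : Fin N → ℝ} (hu : Sparse k u) : Sparse k (c • u) := by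
  refine le_trans (le_trans ?_ le_rfl) hu
  apply Set.ncard_le_ncard _ (Set.toFinite _)
  intro i hi
  simp only [Set.mem_setOf_eq, Pi.smul_apply, smul_eq_mul] at hi ⊢
  exact fun h => hi (by simp [h])


variable {n N k : ℕ} {δ : ℝ} {Φ : Matrix (Fin n) (Fin N) ℝ}

lemma ro_half (hΦ : RIP Φ (2 * k) δ) {u v : Fin N → ℝ}
    (hu : Sparse k u) (hv : Sparse k v) (hd : ∀ i, u i = 0 ∨ v i = 0) :
    ∑ i, Φ.mulVec u i * Φ.mulVec v i ≤ δ * ((∑ i, u i ^ 2) + (∑ i, v i ^ 2)) / 2 := by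
  have hsub : u - v = u + (-1 : ℝ) • v := by funext i; simp; ring
  have hadd : Sparse (2 * k) (u + v) := sparse_add2 hu hv
  have hsub' : Sparse (2 * k) (u - v) := by
    rw [hsub]; exact sparse_add2 hu (sparse_smul _ hv)
  have e1 : ∑ i, (u + v) i ^ 2 = (∑ i, u i ^ 2) + (∑ i, v i ^ 2) := by
    rw [← Finset.sum_add_distrib]
    refine Finset.sum_congr rfl fun i _ => ?_
    rcases hd i with h | h <;> simp [h] <;> ring
  have e2 : ∑ i, (u - v) i ^ 2 = (∑ i, u i ^ 2) + (∑ i, v i ^ 2) := by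
    rw [← Finset.sum_add_distrib]
    refine Finset.sum_congr rfl fun i _ => ?_
    rcases hd i with h | h <;> simp [h] <;> ring
  have key : 4 * ∑ i, Φ.mulVec u i * Φ.mulVec v i =
      (∑ i, (Φ.mulVec (u + v)) i ^ 2) - ∑ i, (Φ.mulVec (u - v)) i ^ 2 := by
    rw [Matrix.mulVec_add, Matrix.mulVec_sub, ← Finset.sum_sub_distrib, Finset.mul_sum]
    refine Finset.sum_congr rfl fun i _ => ?_
    simp only [Pi.add_apply, Pi.sub_apply]
    ring
  have h1 := (hΦ _ hadd).2
  have h2 := (hΦ _ hsub').1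
  rw [e1] at h1
  rw [e2] at h2
  linarith

lemma ro_le (hΦ : RIP Φ (2 * k) δ) (hδ : 0 ≤ δ) {u v : Fin N → ℝ}
    (hu : Sparse k u) (hv : Sparse k v) (hd : ∀ i, u i = 0 ∨ v i = 0) :
    ∑ i, Φ.mulVec u i * Φ.mulVec v i ≤ δ * l2norm u * l2norm v := by
  rcases eq_or_lt_of_le (Finset.sum_nonneg fun i _ => sq_nonneg (u i)) with h0 | hupos
  · have : u = 0 := sum_sq_eq_zero h0.symm
    subst this
    simp [Matrix.mulVec_zero]
    exact mul_nonneg (mul_nonneg hδ (l2norm_nonneg _)) (l2norm_nonneg _)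
  rcases eq_or_lt_of_le (Finset.sum_nonneg fun i _ => sq_nonneg (v i)) with h0 | hvpos
  · have : v = 0 := sum_sq_eq_zero h0.symm
    subst this
    simp [Matrix.mulVec_zero]
    exact mul_nonneg (mul_nonneg hδ (l2norm_nonneg _)) (l2norm_nonneg _)
  set a := l2norm u with ha
  set b := l2norm v with hb
  have ha2 : a ^ 2 = ∑ i, u i ^ 2 := l2norm_sq u
  have hb2 : b ^ 2 = ∑ i, v i ^ 2 := l2norm_sq v
  have hapos : 0 < a := by
    have := l2norm_nonneg u
    rcases this.lt_or_eq with h | h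
    · exact h
    · exfalso; rw [← ha] at *; nlinarith
  have hbpos : 0 < b := by
    have := l2norm_nonneg v
    rcases this.lt_or_eq with h | h
    · exact h
    · exfalso; rw [← hb] at *; nlinarith
  set t : ℝ := Real.sqrt (b / a) with ht
  have htpos : 0 < t := Real.sqrt_pos.mpr (by positivity)
  have ht2 : t ^ 2 = b / a := Real.sq_sqrt (by positivity)
  have hd' : ∀ i, (t • u) i = 0 ∨ (t⁻¹ • v) i = 0 := by
    intro i
    rcases hd i with h | h
    · left; simp [h]
    · right; simp [h]
  have := ro_half hΦ (sparse_smul t hu) (sparse_smul t⁻¹ hv) hd'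
  rw [Matrix.mulVec_smul, Matrix.mulVec_smul] at this
  have hlhs : ∑ i, (t • Φ.mulVec u) i * (t⁻¹ • Φ.mulVec v) i
      = ∑ i, Φ.mulVec u i * Φ.mulVec v i := by
    refine Finset.sum_congr rfl fun i _ => ?_
    simp only [Pi.smul_apply, smul_eq_mul]
    field_simp
  have hsu : ∑ i, (t • u) i ^ 2 = a * b := by
    have : ∑ i, (t • u) i ^ 2 = t ^ 2 * ∑ i, u i ^ 2 := by
      rw [Finset.mul_sum]; refine Finset.sum_congr rfl fun i _ => ?_
      simp only [Pi.smul_apply, smul_eq_mul]; ring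
    rw [this, ht2, ← ha2]
    field_simp
  have hsv : ∑ i, (t⁻¹ • v) i ^ 2 = a * b := by
    have h1 : ∑ i, (t⁻¹ • v) i ^ 2 = (t ^ 2)⁻¹ * ∑ i, v i ^ 2 := by
      rw [Finset.mul_sum]; refine Finset.sum_congr rfl fun i _ => ?_
      simp only [Pi.smul_apply, smul_eq_mul]; rw [← inv_pow]; ring
    rw [h1, ht2, ← hb2]
    field_simp
  rw [hlhs, hsu, hsv] at this
  calc ∑ i, Φ.mulVec u i * Φ.mulVec v i ≤ δ * (a * b + a * b) / 2 := this
    _ = δ * a * b := by ring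

lemma ro_abs (hΦ : RIP Φ (2 * k) δ) (hδ : 0 ≤ δ) {u v : Fin N → ℝ}
    (hu : Sparse k u) (hv : Sparse k v) (hd : ∀ i, u i = 0 ∨ v i = 0) :
    |∑ i, Φ.mulVec u i * Φ.mulVec v i| ≤ δ * l2norm u * l2norm v := by
  rw [abs_le]
  constructor
  · have hd' : ∀ i, ((-1 : ℝ) • u) i = 0 ∨ v i = 0 := by
      intro i; rcases hd i with h | h
      · left; simp [h]
      · right; exact h
    have := ro_le hΦ hδ (sparse_smul (-1 : ℝ) hu) hv hd'
    rw [Matrix.mulVec_smul] at this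
    have hlhs : ∑ i, ((-1 : ℝ) • Φ.mulVec u) i * Φ.mulVec v i
        = -∑ i, Φ.mulVec u i * Φ.mulVec v i := by
      rw [← Finset.sum_neg_distrib]
      refine Finset.sum_congr rfl fun i _ => ?_
      simp only [Pi.smul_apply, smul_eq_mul]; ring
    have hnorm : l2norm ((-1 : ℝ) • u) = l2norm u := by
      unfold l2norm
      congr 1
      refine Finset.sum_congr rfl fun i _ => ?_
      simp only [Pi.smul_apply, smul_eq_mul]; ring
    rw [hlhs, hnorm] at this
    linarith
  · exact ro_le hΦ hδ hu hv hd


lemma exists_blocks {N : ℕ} (k : ℕ) (hk : 0 < k) (S : Finset (Fin N)) (h : Fin N → ℝ) :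
    ∃ (B : ℕ) (T : ℕ → Finset (Fin N)),
      2 ≤ B ∧
      T 0 = S ∧
      (∀ j j', j ≠ j' → Disjoint (T j) (T j')) ∧
      ((Finset.range B).biUnion T = Finset.univ) ∧
      ((Finset.Ico 1 B).biUnion T = Sᶜ) ∧
      (∀ j, 1 ≤ j → (T j).card ≤ k) ∧
      (∀ j, 1 ≤ j → ∀ i ∈ T (j + 1), (k : ℝ) * |h i| ≤ ∑ i' ∈ T j, |h i'|) := by
  classical
  set f0 : Fin Sᶜ.card → Fin N := fun a => ((Sᶜ.orderIsoOfFin rfl) a : Fin N) with hf0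
  set σ : Equiv.Perm (Fin Sᶜ.card) := Tuple.sort (fun b => -|h (f0 b)|) with hσ
  set e : Fin Sᶜ.card → Fin N := fun a => f0 (σ a) with he
  have hf0inj : Function.Injective f0 := fun a b hab => by
    apply (Sᶜ.orderIsoOfFin rfl).injective
    exact Subtype.ext hab
  have heinj : Function.Injective e := fun a b hab => σ.injective (hf0inj hab)
  have hemem : ∀ a, e a ∈ Sᶜ := fun a => ((Sᶜ.orderIsoOfFin rfl) (σ a)).2
  have hesurj : ∀ i ∈ Sᶜ, ∃ a, e a = i := by
    intro i hi
    refine ⟨σ.symm ((Sᶜ.orderIsoOfFin rfl).symm ⟨i, hi⟩), ?_⟩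
    show f0 (σ (σ.symm _)) = i
    rw [Equiv.apply_symm_apply]
    show ((Sᶜ.orderIsoOfFin rfl) ((Sᶜ.orderIsoOfFin rfl).symm ⟨i, hi⟩) : Fin N) = i
    rw [OrderIso.apply_symm_apply]
  have hemono : ∀ a b : Fin Sᶜ.card, a ≤ b → |h (e b)| ≤ |h (e a)| := by
    intro a b hab
    have h1 := Tuple.monotone_sort (fun b => -|h (f0 b)|) hab
    simp only [Function.comp_apply] at h1
    have h2 : -|h (f0 (σ a))| ≤ -|h (f0 (σ b))| := h1
    simp only [he]
    linarith
  set B := Sᶜ.card / k + 2 with hB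
  set T : ℕ → Finset (Fin N) :=
    fun j => if j = 0 then S
      else (Finset.univ.filter (fun a : Fin Sᶜ.card => (a : ℕ) / k + 1 = j)).image e with hT
  have hT0 : T 0 = S := if_pos rfl
  have hTmem : ∀ j, j ≠ 0 → ∀ i, (i ∈ T j ↔ ∃ a : Fin Sᶜ.card, (a : ℕ) / k + 1 = j ∧ e a = i) := by
    intro j hj i
    simp [hT, if_neg hj, Finset.mem_image, Finset.mem_filter]
  have hTSc : ∀ j, j ≠ 0 → ∀ i ∈ T j, i ∈ Sᶜ := by
    intro j hj i hi
    obtain ⟨a, -, rfl⟩ := (hTmem j hj i).mp hi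
    exact hemem a
  have hdisj : ∀ j j', j ≠ j' → Disjoint (T j) (T j') := by
    intro j j' hjj'
    rw [Finset.disjoint_left]
    intro i hij hij'
    rcases Nat.eq_zero_or_pos j with rfl | hj
    · rcases Nat.eq_zero_or_pos j' with rfl | hj'
      · exact hjj' rfl
      · have := hTSc j' (by omega) i hij'
        rw [hT0] at hij
        exact (Finset.mem_compl.mp this) hij
    · rcases Nat.eq_zero_or_pos j' with rfl | hj'
      · have := hTSc j (by omega) i hij
        rw [hT0] at hij'
        exact (Finset.mem_compl.mp this) hij'
      · obtain ⟨a, ha, rfl⟩ := (hTmem j (by omega) i).mp hij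
        obtain ⟨a', ha', hea⟩ := (hTmem j' (by omega) _).mp hij'
        have : a' = a := heinj hea
        subst this
        exact hjj' (by rw [← ha, ← ha'])
  have hidx : ∀ a : Fin Sᶜ.card, (a : ℕ) / k + 1 < B := by
    intro a
    have h1 : (a : ℕ) / k ≤ Sᶜ.card / k := Nat.div_le_div_right (le_of_lt a.2)
    simp only [hB]
    exact Nat.lt_succ_of_le (Nat.succ_le_succ h1)
  have hcover : (Finset.range B).biUnion T = Finset.univ := by
    apply Finset.eq_univ_of_forall
    intro i
    rw [Finset.mem_biUnion]
    by_cases hiS : i ∈ S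
    · exact ⟨0, Finset.mem_range.mpr (by simp only [hB]; exact Nat.lt_of_lt_of_le Nat.zero_lt_two (Nat.le_add_left _ _)), by rwa [hT0]⟩
    · obtain ⟨a, rfl⟩ := hesurj i (Finset.mem_compl.mpr hiS)
      refine ⟨(a : ℕ) / k + 1, Finset.mem_range.mpr (hidx a), ?_⟩
      exact (hTmem _ (Nat.succ_ne_zero _) _).mpr ⟨a, rfl, rfl⟩
  have hcoverc : (Finset.Ico 1 B).biUnion T = Sᶜ := by
    ext i
    rw [Finset.mem_biUnion]
    constructor
    · rintro ⟨j, hj, hij⟩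
      rw [Finset.mem_Ico] at hj
      exact hTSc j (by omega) i hij
    · intro hi
      obtain ⟨a, rfl⟩ := hesurj i hi
      refine ⟨(a : ℕ) / k + 1, Finset.mem_Ico.mpr ⟨Nat.le_add_left 1 _, hidx a⟩, ?_⟩
      exact (hTmem _ (Nat.succ_ne_zero _) _).mpr ⟨a, rfl, rfl⟩
  have hjjk : ∀ j : ℕ, 1 ≤ j → (j - 1) * k + k = j * k := by
    intro j hj
    have h' : j - 1 + 1 = j := by omega
    calc (j - 1) * k + k = (j - 1 + 1) * k := by ring
      _ = j * k := by rw [h']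
  have hcard : ∀ j, 1 ≤ j → (T j).card ≤ k := by
    intro j hj
    have hTj : T j = (Finset.univ.filter (fun a : Fin Sᶜ.card => (a : ℕ) / k + 1 = j)).image e := by
      rw [hT]; exact if_neg (by omega)
    rw [hTj]
    refine le_trans (Finset.card_image_le) ?_
    have hsub : ∀ a ∈ Finset.univ.filter (fun a : Fin Sᶜ.card => (a : ℕ) / k + 1 = j),
        (a : ℕ) ∈ Finset.Ico ((j - 1) * k) ((j - 1) * k + k) := by
      intro a ha
      rw [Finset.mem_filter] at ha
      have hak : (a : ℕ) / k = j - 1 := by omega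
      rw [Finset.mem_Ico]
      constructor
      · rw [← hak]; exact Nat.div_mul_le_self _ _
      · rw [hjjk j hj]
        exact (Nat.div_lt_iff_lt_mul hk).mp (by omega)
    calc (Finset.univ.filter (fun a : Fin Sᶜ.card => (a : ℕ) / k + 1 = j)).card
        ≤ (Finset.Ico ((j - 1) * k) ((j - 1) * k + k)).card :=
          Finset.card_le_card_of_injOn (fun a => (a : ℕ)) hsub
            (fun a _ b _ hab => Fin.ext hab)
      _ = k := by rw [Nat.card_Ico, Nat.add_sub_cancel_left]
  have hkey : ∀ j, 1 ≤ j → ∀ i ∈ T (j + 1), (k : ℝ) * |h i| ≤ ∑ i' ∈ T j, |h i'| := by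
    intro j hj i hi
    obtain ⟨a, hak, rfl⟩ := (hTmem (j + 1) (by omega) i).mp hi
    have hak' : (a : ℕ) / k = j := by omega
    have hjka : j * k ≤ (a : ℕ) := by
      rw [← hak']; exact Nat.div_mul_le_self _ _
    set ψ : ℕ → Fin Sᶜ.card := fun c => if hc : c < Sᶜ.card then (⟨c, hc⟩ : Fin Sᶜ.card) else a with hψ
    set D : Finset ℕ := Finset.Ico ((j - 1) * k) (j * k) with hD
    have hDlt : ∀ c ∈ D, c < Sᶜ.card := by
      intro c hc
      rw [hD, Finset.mem_Ico] at hc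
      exact lt_of_lt_of_le hc.2 (le_trans hjka (le_of_lt a.2))
    have hψval : ∀ c ∈ D, ((ψ c : Fin Sᶜ.card) : ℕ) = c := by
      intro c hc
      rw [hψ]
      simp [dif_pos (hDlt c hc)]
    have hTj : T j = (Finset.univ.filter (fun a : Fin Sᶜ.card => (a : ℕ) / k + 1 = j)).image e := by
      rw [hT]; exact if_neg (by omega)
    have hsum1 : ∑ i' ∈ T j, |h i'| =
        ∑ b ∈ Finset.univ.filter (fun a : Fin Sᶜ.card => (a : ℕ) / k + 1 = j), |h (e b)| := by
      rw [hTj, Finset.sum_image (fun a _ b _ hab => heinj hab)]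
    have hψmem : ∀ c ∈ D, ψ c ∈ Finset.univ.filter (fun a : Fin Sᶜ.card => (a : ℕ) / k + 1 = j) := by
      intro c hc
      rw [Finset.mem_filter]
      refine ⟨Finset.mem_univ _, ?_⟩
      rw [hψval c hc]
      rw [hD, Finset.mem_Ico] at hc
      have hle : j - 1 ≤ c / k := (Nat.le_div_iff_mul_le hk).mpr hc.1
      have hlt : c / k < j := (Nat.div_lt_iff_lt_mul hk).mpr hc.2
      omega
    have hψinj : Set.InjOn ψ D := by
      intro c1 hc1 c2 hc2 hcc
      have h1 := hψval c1 hc1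
      rw [hcc, hψval c2 hc2] at h1
      omega
    have hterm : ∀ c ∈ D, |h (e a)| ≤ |h (e (ψ c))| := by
      intro c hc
      apply hemono
      rw [Fin.le_def, hψval c hc]
      rw [hD, Finset.mem_Ico] at hc
      exact le_of_lt (lt_of_lt_of_le hc.2 hjka)
    have hDcard : D.card = k := by
      rw [hD, Nat.card_Ico, ← hjjk j hj, Nat.add_sub_cancel_left]
    calc (k : ℝ) * |h (e a)| = ∑ _c ∈ D, |h (e a)| := by
          rw [Finset.sum_const, hDcard, nsmul_eq_mul]
      _ ≤ ∑ c ∈ D, |h (e (ψ c))| := Finset.sum_le_sum hterm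
      _ = ∑ b ∈ D.image ψ, |h (e b)| :=
          (Finset.sum_image (g := ψ) (f := fun b => |h (e b)|)
            (fun c1 h1 c2 h2 hcc => hψinj h1 h2 hcc)).symm
      _ ≤ ∑ b ∈ Finset.univ.filter (fun a : Fin Sᶜ.card => (a : ℕ) / k + 1 = j), |h (e b)| := by
          apply Finset.sum_le_sum_of_subset_of_nonneg
          · intro b hb
            rw [Finset.mem_image] at hb
            obtain ⟨c, hc, rfl⟩ := hb
            exact hψmem c hc
          · intro _ _ _
            exact abs_nonneg _
      _ = ∑ i' ∈ T j, |h i'| := hsum1.symm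
  exact ⟨B, T, by simp only [hB]; exact Nat.le_add_left 2 _, hT0, hdisj, hcover, hcoverc, hcard, hkey⟩


end CSRec

/-- Noiseless recovery under RIP: if `δ_{2k} < √2 - 1`, any ℓ¹-minimizer `x*` subject to
`Φ z = Φ x` satisfies `‖x* - x‖₁ ≤ C₀ ‖x - x_(k)‖₁` and
`‖x* - x‖₂ ≤ C₀ k^{-1/2} ‖x - x_(k)‖₁`, where `C₀` depends only on `δ_{2k}`;
in particular `k`-sparse signals are recovered exactly. -/
theorem noiseless_recovery_under_RIP (δ : ℝ) (hδpos : 0 < δ) (hδ : δ < Real.sqrt 2 - 1) :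
    ∃ C₀ : ℝ, 0 < C₀ ∧
      ∀ (n N k : ℕ), 0 < k →
        ∀ Φ : Matrix (Fin n) (Fin N) ℝ, RIP Φ (2 * k) δ →
          ∀ x xk xstar : Fin N → ℝ, IsBestKTerm k x xk →
            Φ.mulVec xstar = Φ.mulVec x →
            (∀ z : Fin N → ℝ, Φ.mulVec z = Φ.mulVec x → l1norm xstar ≤ l1norm z) →
            l1norm (xstar - x) ≤ C₀ * l1norm (x - xk) ∧
            l2norm (xstar - x) ≤ C₀ * (Real.sqrt k)⁻¹ * l1norm (x - xk) ∧
            (Sparse k x → xstar = x) := by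
  classical
  open Finset CSRec in
  have hs2 : Real.sqrt 2 ^ 2 = 2 := Real.sq_sqrt (by norm_num)
  have hs2pos : 0 < Real.sqrt 2 := Real.sqrt_pos.mpr (by norm_num)
  have hδ1 : δ < 1 := by nlinarith
  have h1δ : (0:ℝ) < 1 - δ := by linarith
  set c : ℝ := 1 - δ - Real.sqrt 2 * δ with hc
  clear_value c
  have hcpos : 0 < c := by rw [hc]; nlinarith
  have hs2δ : Real.sqrt 2 * δ < 1 - δ := by
    have := hcpos; rw [hc] at this; linarith
  set C₀ : ℝ := 4 * (1 - δ) / c + 4 / c + 2 with hC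
  clear_value C₀
  have hC₀pos : 0 < C₀ := by
    rw [hC]
    have h1 : 0 < 4 * (1 - δ) / c := div_pos (by linarith) hcpos
    have h2 : 0 < 4 / c := div_pos (by norm_num) hcpos
    linarith
  refine ⟨C₀, hC₀pos, ?_⟩
  intro n N k hk Φ hΦ x xk xstar hbest heq hmin
  obtain ⟨S, hScard, hxkS, hxkSc, hdom⟩ := hbest
  set h : Fin N → ℝ := xstar - x with hh
  clear_value h
  have hkR : (0:ℝ) < (k:ℝ) := by exact_mod_cast hk
  have hskpos : (0:ℝ) < Real.sqrt k := Real.sqrt_pos.mpr hkR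
  have hsknn : (0:ℝ) ≤ Real.sqrt k := hskpos.le
  -- e₀
  have hdiffi : ∀ i, (x - xk) i = if i ∈ S then 0 else x i := by
    intro i
    by_cases hi : i ∈ S
    · simp [hi, hxkS i hi]
    · simp [hi, hxkSc i hi]
  have he0 : l1norm (x - xk) = ∑ i ∈ Sᶜ, |x i| := by
    unfold l1norm
    rw [← Finset.sum_add_sum_compl S]
    have h1 : ∑ i ∈ S, |(x - xk) i| = 0 :=
      Finset.sum_eq_zero (fun i hi => by rw [hdiffi]; simp [hi])
    have h2 : ∑ i ∈ Sᶜ, |(x - xk) i| = ∑ i ∈ Sᶜ, |x i| :=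
      Finset.sum_congr rfl (fun i hi => by rw [hdiffi]; simp [Finset.mem_compl.mp hi])
    rw [h1, h2, zero_add]
  set e₀ : ℝ := ∑ i ∈ Sᶜ, |x i| with he₀def
  clear_value e₀
  have he₀nn : 0 ≤ e₀ := by rw [he₀def]; exact Finset.sum_nonneg fun i _ => abs_nonneg _
  -- Φ h = 0
  have hΦh : Φ.mulVec h = 0 := by rw [hh, Matrix.mulVec_sub, heq, sub_self]
  -- cone constraint
  set E0 : ℝ := ∑ i ∈ S, |h i| with hE0def
  clear_value E0
  set E1 : ℝ := ∑ i ∈ Sᶜ, |h i| with hE1def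
  clear_value E1
  have hE0nn : 0 ≤ E0 := by rw [hE0def]; exact Finset.sum_nonneg fun i _ => abs_nonneg _
  have hE1nn : 0 ≤ E1 := by rw [hE1def]; exact Finset.sum_nonneg fun i _ => abs_nonneg _
  have hcone : E1 ≤ E0 + 2 * e₀ := by
    have hm := hmin x rfl
    unfold l1norm at hm
    rw [← Finset.sum_add_sum_compl S (fun i => |xstar i|),
      ← Finset.sum_add_sum_compl S (fun i => |x i|)] at hm
    have h1 : ∑ i ∈ S, (|x i| - |h i|) ≤ ∑ i ∈ S, |xstar i| := by
      refine Finset.sum_le_sum fun i _ => ?_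
      have : |x i| ≤ |xstar i| + |h i| := by
        calc |x i| = |xstar i - h i| := by rw [hh]; simp [Pi.sub_apply]
          _ ≤ |xstar i| + |h i| := abs_sub _ _
      linarith
    have h2 : ∑ i ∈ Sᶜ, (|h i| - |x i|) ≤ ∑ i ∈ Sᶜ, |xstar i| := by
      refine Finset.sum_le_sum fun i _ => ?_
      have : |h i| ≤ |xstar i| + |x i| := by
        calc |h i| = |xstar i - x i| := by rw [hh]; simp [Pi.sub_apply]
          _ ≤ |xstar i| + |x i| := abs_sub _ _
      linarith
    rw [Finset.sum_sub_distrib] at h1 h2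
    rw [hE0def, hE1def, he₀def]
    linarith
  -- blocks
  obtain ⟨B, T, hB2, hT0, hdisj, hcover, hcoverc, hcard, hkey⟩ := CSRec.exists_blocks k hk S h
  set g : ℕ → Fin N → ℝ := fun j i => if i ∈ T j then h i else 0 with hg
  clear_value g
  have hgsupp : ∀ j i, g j i ≠ 0 → i ∈ T j := by
    intro j i h0
    by_contra hni
    exact h0 (by simp [hg, hni])
  have hgsq : ∀ j, ∑ i, g j i ^ 2 = ∑ i ∈ T j, h i ^ 2 := by
    intro j
    calc ∑ i, g j i ^ 2 = ∑ i, (if i ∈ T j then h i ^ 2 else 0) := by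
          refine Finset.sum_congr rfl fun i _ => ?_
          by_cases hi : i ∈ T j <;> simp [hg, hi]
      _ = ∑ i ∈ Finset.univ ∩ T j, h i ^ 2 := Finset.sum_ite_mem _ _ _
      _ = ∑ i ∈ T j, h i ^ 2 := by rw [Finset.univ_inter]
  have hgd : ∀ j j', j ≠ j' → ∀ i, g j i = 0 ∨ g j' i = 0 := by
    intro j j' hjj' i
    by_cases h0 : g j i = 0
    · exact Or.inl h0
    · right
      have hi0 : i ∈ T j := hgsupp j i h0
      have : i ∉ T j' := Finset.disjoint_left.mp (hdisj j j' hjj') hi0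
      simp [hg, this]
  have hgsparse : ∀ j, 1 ≤ j → Sparse k (g j) :=
    fun j hj => sparse_of_card_le (hcard j hj) (hgsupp j)
  have hg0sparse : Sparse k (g 0) := by
    refine sparse_of_card_le ?_ (hgsupp 0)
    rw [hT0, hScard]
    exact min_le_left _ _
  -- partition of sums
  have hpartc : ∀ f : Fin N → ℝ, ∑ j ∈ Finset.Ico 1 B, ∑ i ∈ T j, f i = ∑ i ∈ Sᶜ, f i := by
    intro f
    rw [← hcoverc]
    exact (Finset.sum_biUnion (fun j _ j' _ hjj' => hdisj j j' hjj')).symm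
  have hgsum : ∑ j ∈ Finset.range B, g j = h := by
    funext i
    rw [Finset.sum_apply]
    have hex : ∃ j0, j0 ∈ Finset.range B ∧ i ∈ T j0 := by
      have : i ∈ (Finset.range B).biUnion T := by rw [hcover]; exact Finset.mem_univ i
      rw [Finset.mem_biUnion] at this
      obtain ⟨j0, hj0, hj0'⟩ := this
      exact ⟨j0, hj0, hj0'⟩
    obtain ⟨j0, hj0B, hij0⟩ := hex
    rw [Finset.sum_eq_single j0]
    · simp [hg, hij0]
    · intro j hj hjne
      have : i ∉ T j := Finset.disjoint_left.mp (hdisj j0 j hjne.symm) hij0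
      simp [hg, this]
    · intro hcon
      exact absurd hj0B hcon
  have hrange : Finset.range B = insert 0 (insert 1 (Finset.Ico 2 B)) := by
    ext j
    simp only [Finset.mem_range, Finset.mem_insert, Finset.mem_Ico]
    omega
  set h01 : Fin N → ℝ := g 0 + g 1 with hh01
  clear_value h01
  have hsplit2 : h = h01 + ∑ j ∈ Finset.Ico 2 B, g j := by
    rw [hh01, ← hgsum, hrange]
    rw [Finset.sum_insert (by simp [Finset.mem_insert, Finset.mem_Ico]),
      Finset.sum_insert (by simp [Finset.mem_Ico])]
    abel
  have hmulsum : Φ.mulVec (∑ j ∈ Finset.Ico 2 B, g j) = ∑ j ∈ Finset.Ico 2 B, Φ.mulVec (g j) := by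
    have h1 : Φ.mulVecLin (∑ j ∈ Finset.Ico 2 B, g j) = ∑ j ∈ Finset.Ico 2 B, Φ.mulVecLin (g j) :=
      map_sum _ _ _
    simp only [Matrix.mulVecLin_apply] at h1
    exact h1
  have hΦ01 : Φ.mulVec h01 = -∑ j ∈ Finset.Ico 2 B, Φ.mulVec (g j) := by
    have hz : Φ.mulVec h01 + ∑ j ∈ Finset.Ico 2 B, Φ.mulVec (g j) = 0 := by
      rw [← hmulsum, ← Matrix.mulVec_add, ← hsplit2, hΦh]
    exact eq_neg_of_add_eq_zero_left hz
  -- norms of blocks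
  set P : ℝ := l2norm h01 with hP
  clear_value P
  set Z : ℝ := ∑ j ∈ Finset.Ico 2 B, l2norm (g j) with hZ
  clear_value Z
  have hPnn : 0 ≤ P := by rw [hP]; exact l2norm_nonneg _
  have hZnn : 0 ≤ Z := by rw [hZ]; exact Finset.sum_nonneg fun j _ => l2norm_nonneg _
  have hPsq : P ^ 2 = (∑ i ∈ T 0, h i ^ 2) + ∑ i ∈ T 1, h i ^ 2 := by
    rw [hP, l2norm_sq]
    have hpt : ∀ i, h01 i ^ 2 = g 0 i ^ 2 + g 1 i ^ 2 := by
      intro i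
      have : h01 i = g 0 i + g 1 i := by rw [hh01]; simp
      rcases hgd 0 1 (by omega) i with h' | h' <;> rw [this, h'] <;> ring
    calc ∑ i, h01 i ^ 2 = ∑ i, (g 0 i ^ 2 + g 1 i ^ 2) := Finset.sum_congr rfl fun i _ => hpt i
      _ = (∑ i, g 0 i ^ 2) + ∑ i, g 1 i ^ 2 := Finset.sum_add_distrib
      _ = _ := by rw [hgsq 0, hgsq 1]
  -- √k Z ≤ E1
  have hZE1 : Real.sqrt k * Z ≤ E1 := by
    set F : ℕ → ℝ := fun j => ∑ i ∈ T j, |h i| with hF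
    have hFnn : ∀ j, 0 ≤ F j := fun j => Finset.sum_nonneg fun i _ => abs_nonneg _
    have hper : ∀ j ∈ Finset.Ico 2 B, Real.sqrt k * l2norm (g j) ≤ F (j - 1) := by
      intro j hj
      rw [Finset.mem_Ico] at hj
      have hj1 : 1 ≤ j - 1 := by omega
      have hjeq : j - 1 + 1 = j := by omega
      have hkey' : ∀ i ∈ T j, (k : ℝ) * |h i| ≤ F (j - 1) := by
        have := hkey (j - 1) hj1
        rwa [hjeq] at this
      refine le_of_sq_le_sq' (mul_nonneg hsknn (l2norm_nonneg _)) (hFnn _) ?_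
      rw [mul_pow, Real.sq_sqrt hkR.le, l2norm_sq, hgsq j]
      have hAnn : 0 ≤ F (j - 1) := hFnn _
      have h1 : ∑ i ∈ T j, h i ^ 2 ≤ ∑ i ∈ T j, F (j - 1) / k * |h i| := by
        refine Finset.sum_le_sum fun i hi => ?_
        have h2 : |h i| ≤ F (j - 1) / k := (le_div_iff₀ hkR).mpr (by linarith [hkey' i hi])
        calc h i ^ 2 = |h i| * |h i| := by rw [← sq_abs]; ring
          _ ≤ F (j - 1) / k * |h i| := mul_le_mul_of_nonneg_right h2 (abs_nonneg _)
      have h2 : ∑ i ∈ T j, F (j - 1) / k * |h i| = F (j - 1) / k * F j := by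
        rw [hF, ← Finset.mul_sum]
      have h3 : F j ≤ F (j - 1) := by
        calc F j ≤ ∑ _i ∈ T j, F (j - 1) / k := by
              refine Finset.sum_le_sum fun i hi => ?_
              exact (le_div_iff₀ hkR).mpr (by linarith [hkey' i hi])
          _ = (T j).card * (F (j - 1) / k) := by rw [Finset.sum_const, nsmul_eq_mul]
          _ ≤ (k : ℝ) * (F (j - 1) / k) := by
              refine mul_le_mul_of_nonneg_right ?_ (div_nonneg hAnn hkR.le)
              exact_mod_cast hcard j (by omega)
          _ = F (j - 1) := by field_simp
      calc (k : ℝ) * ∑ i ∈ T j, h i ^ 2 ≤ (k : ℝ) * (F (j - 1) / k * F j) := by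
            refine mul_le_mul_of_nonneg_left ?_ hkR.le
            rw [← h2]; exact h1
        _ ≤ (k : ℝ) * (F (j - 1) / k * F (j - 1)) := by
            refine mul_le_mul_of_nonneg_left ?_ hkR.le
            exact mul_le_mul_of_nonneg_left h3 (div_nonneg hAnn hkR.le)
        _ = F (j - 1) ^ 2 := by field_simp
    calc Real.sqrt k * Z = ∑ j ∈ Finset.Ico 2 B, Real.sqrt k * l2norm (g j) := by
          rw [hZ, Finset.mul_sum]
      _ ≤ ∑ j ∈ Finset.Ico 2 B, F (j - 1) := Finset.sum_le_sum hper
      _ = ∑ j ∈ (Finset.Ico 2 B).image (fun j => j - 1), F j := by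
          rw [Finset.sum_image (g := fun j => j - 1) (f := F)]
          intro a ha b hb hab
          rw [Finset.mem_coe, Finset.mem_Ico] at ha hb
          simp only at hab
          omega
      _ ≤ ∑ j ∈ Finset.Ico 1 B, F j := by
          refine Finset.sum_le_sum_of_subset_of_nonneg ?_ (fun j _ _ => hFnn j)
          intro m hm
          rw [Finset.mem_image] at hm
          obtain ⟨j, hj, rfl⟩ := hm
          rw [Finset.mem_Ico] at hj ⊢
          omega
      _ = E1 := by rw [hF, hpartc (fun i => |h i|), hE1def]
  -- E0 ≤ √k * P
  have hE0P : E0 ≤ Real.sqrt k * P := by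
    refine le_of_sq_le_sq' hE0nn (mul_nonneg hsknn hPnn) ?_
    rw [mul_pow, Real.sq_sqrt hkR.le]
    have hcs := Finset.sum_mul_sq_le_sq_mul_sq S (fun i => |h i|) (fun _ => (1:ℝ))
    simp only [mul_one, one_pow] at hcs
    have habs2 : ∑ i ∈ S, |h i| ^ 2 = ∑ i ∈ S, h i ^ 2 :=
      Finset.sum_congr rfl fun i _ => sq_abs _
    have hsum1S : ∑ _i ∈ S, (1:ℝ) = (S.card : ℝ) := by
      rw [Finset.sum_const, nsmul_eq_mul, mul_one]
    rw [habs2, hsum1S] at hcs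
    have hcardk : ((S.card : ℕ) : ℝ) ≤ (k : ℝ) := by
      have : S.card ≤ k := by rw [hScard]; exact min_le_left _ _
      exact_mod_cast this
    have hSsq : ∑ i ∈ S, h i ^ 2 ≤ P ^ 2 := by
      rw [hPsq, hT0]
      have : 0 ≤ ∑ i ∈ T 1, h i ^ 2 := Finset.sum_nonneg fun i _ => sq_nonneg _
      linarith
    have hSsqnn : 0 ≤ ∑ i ∈ S, h i ^ 2 := Finset.sum_nonneg fun i _ => sq_nonneg _
    calc E0 ^ 2 ≤ (∑ i ∈ S, h i ^ 2) * (S.card : ℝ) := by rw [hE0def]; exact hcs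
      _ ≤ (∑ i ∈ S, h i ^ 2) * (k : ℝ) := mul_le_mul_of_nonneg_left hcardk hSsqnn
      _ ≤ P ^ 2 * (k : ℝ) := mul_le_mul_of_nonneg_right hSsq hkR.le
      _ = (k : ℝ) * P ^ 2 := by ring
  -- RIP chain: (1-δ) P ≤ √2 δ Z
  have h01sparse : Sparse (2 * k) h01 := by
    rw [hh01]; exact sparse_add2 hg0sparse (hgsparse 1 le_rfl)
  have hFi : ∀ i', Φ.mulVec h01 i' = -∑ j ∈ Finset.Ico 2 B, Φ.mulVec (g j) i' := by
    intro i'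
    rw [hΦ01]
    simp [Finset.sum_apply]
  have hstep : ∑ i, (Φ.mulVec h01) i ^ 2 =
      ∑ j ∈ Finset.Ico 2 B, -(∑ i, (Φ.mulVec h01) i * (Φ.mulVec (g j)) i) := by
    calc ∑ i, (Φ.mulVec h01) i ^ 2
        = ∑ i, ∑ j ∈ Finset.Ico 2 B, -((Φ.mulVec h01) i * (Φ.mulVec (g j)) i) := by
          refine Finset.sum_congr rfl fun i _ => ?_
          rw [sq]
          nth_rewrite 2 [hFi i]
          rw [mul_neg, Finset.mul_sum, ← Finset.sum_neg_distrib]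
      _ = ∑ j ∈ Finset.Ico 2 B, ∑ i, -((Φ.mulVec h01) i * (Φ.mulVec (g j)) i) :=
          Finset.sum_comm
      _ = _ := by
          refine Finset.sum_congr rfl fun j _ => ?_
          rw [Finset.sum_neg_distrib]
  have h01ab : l2norm (g 0) + l2norm (g 1) ≤ Real.sqrt 2 * P := by
    refine le_of_sq_le_sq' (add_nonneg (l2norm_nonneg _) (l2norm_nonneg _))
      (mul_nonneg hs2pos.le hPnn) ?_
    have ha := l2norm_sq (g 0)
    have hb := l2norm_sq (g 1)
    have hP2 : P ^ 2 = l2norm (g 0) ^ 2 + l2norm (g 1) ^ 2 := by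
      rw [ha, hb, hgsq 0, hgsq 1, hPsq]
    rw [mul_pow, hs2]
    nlinarith [sq_nonneg (l2norm (g 0) - l2norm (g 1))]
  have hF2 : ∑ i, (Φ.mulVec h01) i ^ 2 ≤ Real.sqrt 2 * δ * P * Z := by
    rw [hstep]
    have hperj : ∀ j ∈ Finset.Ico 2 B,
        -(∑ i, (Φ.mulVec h01) i * (Φ.mulVec (g j)) i) ≤
          δ * (l2norm (g 0) + l2norm (g 1)) * l2norm (g j) := by
      intro j hj
      rw [Finset.mem_Ico] at hj
      have hip : ∑ i, (Φ.mulVec h01) i * (Φ.mulVec (g j)) i =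
          (∑ i, (Φ.mulVec (g 0)) i * (Φ.mulVec (g j)) i) +
          ∑ i, (Φ.mulVec (g 1)) i * (Φ.mulVec (g j)) i := by
        rw [← Finset.sum_add_distrib]
        refine Finset.sum_congr rfl fun i _ => ?_
        have : Φ.mulVec h01 i = Φ.mulVec (g 0) i + Φ.mulVec (g 1) i := by
          rw [hh01, Matrix.mulVec_add]; simp
        rw [this]; ring
      have hb0 := ro_abs hΦ hδpos.le hg0sparse (hgsparse j (by omega)) (hgd 0 j (by omega))
      have hb1 := ro_abs hΦ hδpos.le (hgsparse 1 le_rfl) (hgsparse j (by omega))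
        (hgd 1 j (by omega))
      calc -(∑ i, (Φ.mulVec h01) i * (Φ.mulVec (g j)) i)
          ≤ |∑ i, (Φ.mulVec (g 0)) i * (Φ.mulVec (g j)) i| +
            |∑ i, (Φ.mulVec (g 1)) i * (Φ.mulVec (g j)) i| := by
            rw [hip, neg_add]
            exact add_le_add (neg_le_abs _) (neg_le_abs _)
        _ ≤ δ * l2norm (g 0) * l2norm (g j) + δ * l2norm (g 1) * l2norm (g j) :=
            add_le_add hb0 hb1
        _ = δ * (l2norm (g 0) + l2norm (g 1)) * l2norm (g j) := by ring
    calc ∑ j ∈ Finset.Ico 2 B, -(∑ i, (Φ.mulVec h01) i * (Φ.mulVec (g j)) i)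
        ≤ ∑ j ∈ Finset.Ico 2 B, δ * (l2norm (g 0) + l2norm (g 1)) * l2norm (g j) :=
          Finset.sum_le_sum hperj
      _ = δ * (l2norm (g 0) + l2norm (g 1)) * Z := by rw [hZ, ← Finset.mul_sum]
      _ ≤ δ * (Real.sqrt 2 * P) * Z := by
          refine mul_le_mul_of_nonneg_right ?_ hZnn
          exact mul_le_mul_of_nonneg_left h01ab hδpos.le
      _ = Real.sqrt 2 * δ * P * Z := by ring
  have hRIPlow : (1 - δ) * P ^ 2 ≤ ∑ i, (Φ.mulVec h01) i ^ 2 := by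
    have := (hΦ h01 h01sparse).1
    rw [hP, l2norm_sq]
    exact this
  have hP1 : (1 - δ) * P ≤ Real.sqrt 2 * δ * Z := by
    rcases hPnn.lt_or_eq with hPpos | hP0
    · have hchain : (1 - δ) * P ^ 2 ≤ Real.sqrt 2 * δ * P * Z := le_trans hRIPlow hF2
      have h' : ((1 - δ) * P) * P ≤ (Real.sqrt 2 * δ * Z) * P := by nlinarith [hchain]
      exact le_of_mul_le_mul_right h' hPpos
    · rw [← hP0]
      have hzz : 0 ≤ Real.sqrt 2 * δ * Z := mul_nonneg (mul_nonneg hs2pos.le hδpos.le) hZnn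
      linarith
  -- main inequalities
  have hE0E1 : (1 - δ) * E0 ≤ Real.sqrt 2 * δ * E1 := by
    calc (1 - δ) * E0 ≤ (1 - δ) * (Real.sqrt k * P) :=
          mul_le_mul_of_nonneg_left hE0P h1δ.le
      _ = Real.sqrt k * ((1 - δ) * P) := by ring
      _ ≤ Real.sqrt k * (Real.sqrt 2 * δ * Z) := mul_le_mul_of_nonneg_left hP1 hsknn
      _ = Real.sqrt 2 * δ * (Real.sqrt k * Z) := by ring
      _ ≤ Real.sqrt 2 * δ * E1 := by
          refine mul_le_mul_of_nonneg_left hZE1 ?_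
          positivity
  have hcE1 : c * E1 ≤ 2 * (1 - δ) * e₀ := by
    rw [hc]
    have hcone' := mul_le_mul_of_nonneg_left hcone h1δ.le
    nlinarith [hcone', hE0E1]
  have hE0E1' : E0 ≤ E1 := by
    have h1 : Real.sqrt 2 * δ * E1 ≤ (1 - δ) * E1 :=
      mul_le_mul_of_nonneg_right hs2δ.le hE1nn
    have h2 : (1 - δ) * E0 ≤ (1 - δ) * E1 := le_trans hE0E1 h1
    exact le_of_mul_le_mul_left h2 h1δ
  have hE1b : E1 ≤ 2 * (1 - δ) / c * e₀ := by
    rw [div_mul_eq_mul_div, le_div_iff₀ hcpos]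
    nlinarith [hcE1]
  -- goal 1
  have hl1h : l1norm h = E0 + E1 := by
    unfold l1norm
    rw [← Finset.sum_add_sum_compl S (fun i => |h i|), hE0def, hE1def]
  have hgoal1 : l1norm h ≤ C₀ * e₀ := by
    rw [hl1h, hC]
    have h4c : 0 ≤ 4 / c * e₀ := mul_nonneg (div_nonneg (by norm_num) hcpos.le) he₀nn
    have h2e : 0 ≤ 2 * e₀ := by linarith
    have hmain : E0 + E1 ≤ 4 * (1 - δ) / c * e₀ := by
      have : E0 + E1 ≤ 2 * E1 := by linarith
      have h5 : 2 * E1 ≤ 2 * (2 * (1 - δ) / c * e₀) := by linarith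
      have h6 : 2 * (2 * (1 - δ) / c * e₀) = 4 * (1 - δ) / c * e₀ := by ring
      linarith
    nlinarith [hmain, h4c, h2e]
  -- goal 2
  have hPZh : l2norm h ≤ P + Z := by
    calc l2norm h = l2norm (h01 + ∑ j ∈ Finset.Ico 2 B, g j) := by rw [← hsplit2]
      _ ≤ l2norm h01 + l2norm (∑ j ∈ Finset.Ico 2 B, g j) := l2norm_add_le _ _
      _ ≤ P + Z := by
          rw [hP, hZ]
          exact add_le_add le_rfl (l2norm_sum_le _ _)
  have hA2 : (1 - δ) * (Real.sqrt k * (P + Z)) ≤ 2 * E1 := by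
    have t1 : Real.sqrt k * ((1 - δ) * P) ≤ Real.sqrt k * (Real.sqrt 2 * δ * Z) :=
      mul_le_mul_of_nonneg_left hP1 hsknn
    have u1 : (1 - δ) * (Real.sqrt k * Z) ≤ (1 - δ) * E1 :=
      mul_le_mul_of_nonneg_left hZE1 h1δ.le
    have u2 : Real.sqrt 2 * δ * (Real.sqrt k * Z) ≤ Real.sqrt 2 * δ * E1 := by
      refine mul_le_mul_of_nonneg_left hZE1 ?_
      positivity
    have u3 : Real.sqrt 2 * δ * E1 ≤ (1 - δ) * E1 :=
      mul_le_mul_of_nonneg_right hs2δ.le hE1nn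
    have u4 : (1 - δ) * E1 ≤ E1 := by nlinarith [hE1nn, hδpos]
    linarith [t1, u1, u2, u3, u4]
  have hgoal2pre : Real.sqrt k * (P + Z) ≤ 4 / c * e₀ := by
    rw [div_mul_eq_mul_div, le_div_iff₀ hcpos]
    -- √k(P+Z) * c ≤ 4 e₀
    have h2 : (1 - δ) * (c * (Real.sqrt k * (P + Z))) ≤ (1 - δ) * (4 * e₀) := by
      have h3 : c * ((1 - δ) * (Real.sqrt k * (P + Z))) ≤ c * (2 * E1) :=
        mul_le_mul_of_nonneg_left hA2 hcpos.le
      linarith [h3, hcE1]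
    have h4 : c * (Real.sqrt k * (P + Z)) ≤ 4 * e₀ := le_of_mul_le_mul_left h2 h1δ
    linarith [h4]
  have hgoal2 : l2norm h ≤ C₀ * (Real.sqrt k)⁻¹ * e₀ := by
    have hid : P + Z = (Real.sqrt k)⁻¹ * (Real.sqrt k * (P + Z)) := by
      field_simp
    have h5 : l2norm h ≤ (Real.sqrt k)⁻¹ * (4 / c * e₀) := by
      rw [hid] at hPZh
      refine le_trans hPZh ?_
      exact mul_le_mul_of_nonneg_left hgoal2pre (inv_nonneg.mpr hsknn)
    refine le_trans h5 ?_
    have h6 : (Real.sqrt k)⁻¹ * (4 / c * e₀) = 4 / c * ((Real.sqrt k)⁻¹ * e₀) := by ring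
    have h7 : C₀ * (Real.sqrt k)⁻¹ * e₀ = C₀ * ((Real.sqrt k)⁻¹ * e₀) := by ring
    rw [h6, h7]
    refine mul_le_mul_of_nonneg_right ?_ (mul_nonneg (inv_nonneg.mpr hsknn) he₀nn)
    rw [hC]
    have : 0 ≤ 4 * (1 - δ) / c := div_nonneg (by linarith) hcpos.le
    linarith
  refine ⟨by rw [he0]; exact hgoal1, by rw [he0]; exact hgoal2, ?_⟩
  -- exact recovery
  intro hxsp
  have hSc0 : ∀ i ∈ Sᶜ, x i = 0 := by
    intro i hi
    by_contra hxi
    have hiS : i ∉ S := Finset.mem_compl.mp hi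
    have hSk : ∀ s ∈ S, x s ≠ 0 := by
      intro s hs h0
      have := hdom s hs i hiS
      rw [h0, abs_zero] at this
      exact hxi (abs_eq_zero.mp (le_antisymm this (abs_nonneg _)))
    have hsub : ↑(insert i S) ⊆ {j | x j ≠ 0} := by
      intro j hj
      simp only [Finset.coe_insert, Set.mem_insert_iff, Finset.mem_coe] at hj
      rcases hj with rfl | hj
      · exact hxi
      · exact hSk j hj
    have hcard2 : (insert i S).card = min k N + 1 := by
      rw [Finset.card_insert_of_notMem hiS, hScard]
    have hle : min k N + 1 ≤ k := by
      have h1 : (insert i S).card ≤ {j | x j ≠ 0}.ncard := by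
        rw [← Set.ncard_coe_finset]
        exact Set.ncard_le_ncard hsub (Set.toFinite _)
      rw [hcard2] at h1
      exact le_trans h1 hxsp
    have hNk : min k N = N := by omega
    have hSuniv : S = Finset.univ := by
      apply Finset.eq_univ_of_card
      rw [hScard, hNk, Fintype.card_fin]
    rw [hSuniv] at hiS
    exact hiS (Finset.mem_univ i)
  have he₀0 : e₀ = 0 := by
    rw [he₀def]
    exact Finset.sum_eq_zero fun i hi => by rw [hSc0 i hi, abs_zero]
  have hsum0 : ∑ i, |h i| = 0 := by
    have h1 : l1norm h ≤ 0 := by rw [he₀0] at hgoal1; linarith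
    unfold l1norm at h1
    exact le_antisymm h1 (Finset.sum_nonneg fun i _ => abs_nonneg _)
  have hzero : h = 0 := by
    funext i
    have := (Finset.sum_eq_zero_iff_of_nonneg (fun i _ => abs_nonneg (h i))).mp hsum0 i
      (Finset.mem_univ i)
    exact abs_eq_zero.mp this
  have : xstar - x = 0 := by rw [← hh]; exact hzero
  exact sub_eq_zero.mp this
end

section
/- (Noisy recovery under RIP.) There exist constants C₀, C₁ > 0, depending only on δ_{2k}, with the following property. Let Φ be an n × N real matrix satisfying the Restricted Isometry Property of order 2k with constant δ_{2k} < √2 − 1, let x ∈ ℝ^N, and let y = Φx + z where ‖z‖₂ ≤ ε. Then any solution x* of the problem min ‖w‖₁ subject to ‖y − Φw‖₂ ≤ ε satisfies ‖x* − x‖₂ ≤ C₀ k^{−1/2} ‖x − x_{(k)}‖₁ + C₁ ε, where x_{(k)} is obtained from x by setting all but the k largest-in-magnitude entries to zero. -/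
open Matrix Finset

variable {N : ℕ}

lemma sum_sq_nonneg (x : Fin N → ℝ) : (0:ℝ) ≤ ∑ i, x i ^ 2 :=
  Finset.sum_nonneg fun i _ => sq_nonneg _

lemma l2norm_nonneg (x : Fin N → ℝ) : 0 ≤ l2norm x := Real.sqrt_nonneg _

lemma sq_l2norm (x : Fin N → ℝ) : l2norm x ^ 2 = ∑ i, x i ^ 2 :=
  Real.sq_sqrt (sum_sq_nonneg x)

lemma l1norm_nonneg (x : Fin N → ℝ) : 0 ≤ l1norm x :=
  Finset.sum_nonneg fun i _ => abs_nonneg _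

lemma abs_dot_le (a b : Fin N → ℝ) : |∑ i, a i * b i| ≤ l2norm a * l2norm b := by
  have h := Finset.sum_mul_sq_le_sq_mul_sq Finset.univ a b
  have h2 : |∑ i, a i * b i| = Real.sqrt ((∑ i, a i * b i) ^ 2) := (Real.sqrt_sq_eq_abs _).symm
  rw [h2]
  calc Real.sqrt ((∑ i, a i * b i) ^ 2) ≤ Real.sqrt ((∑ i, a i ^2) * ∑ i, b i ^2) :=
        Real.sqrt_le_sqrt h
    _ = l2norm a * l2norm b := Real.sqrt_mul (sum_sq_nonneg a) _

lemma l2norm_mono_sq {a b : Fin N → ℝ} (h : ∑ i, a i ^ 2 ≤ ∑ i, b i ^ 2) :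
    l2norm a ≤ l2norm b := Real.sqrt_le_sqrt h

lemma l2norm_neg (a : Fin N → ℝ) : l2norm (-a) = l2norm a := by
  unfold l2norm; congr 1; apply Finset.sum_congr rfl; intro i _; simp [neg_pow]

lemma l2norm_add_le (a b : Fin N → ℝ) : l2norm (a + b) ≤ l2norm a + l2norm b := by
  have hab : |∑ i, a i * b i| ≤ l2norm a * l2norm b := abs_dot_le a b
  have h1 : ∑ i, (a + b) i ^ 2 = (∑ i, a i ^2) + 2 * (∑ i, a i * b i) + ∑ i, b i ^2 := by
    rw [Finset.mul_sum, ← Finset.sum_add_distrib, ← Finset.sum_add_distrib]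
    apply Finset.sum_congr rfl; intro i _; simp [Pi.add_apply]; ring
  have : ∑ i, (a + b) i ^ 2 ≤ (l2norm a + l2norm b) ^ 2 := by
    rw [h1, add_sq, sq_l2norm, sq_l2norm]
    have := (abs_le.1 hab).2
    nlinarith
  calc l2norm (a + b) ≤ Real.sqrt ((l2norm a + l2norm b)^2) := Real.sqrt_le_sqrt this
    _ = l2norm a + l2norm b := Real.sqrt_sq (by have := l2norm_nonneg a; have := l2norm_nonneg b; linarith)

/-- restriction of a vector to a finset of coordinates -/
noncomputable def rst {N : ℕ} (T : Finset (Fin N)) (x : Fin N → ℝ) : Fin N → ℝ :=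
  fun i => if i ∈ T then x i else 0

lemma rst_add_compl (T : Finset (Fin N)) (x : Fin N → ℝ) : rst T x + rst Tᶜ x = x := by
  funext i; by_cases h : i ∈ T <;> simp [rst, h]

lemma sparse_of_subset_finset {T : Finset (Fin N)} {x : Fin N → ℝ} {k : ℕ}
    (hs : ∀ i, x i ≠ 0 → i ∈ T) (hc : T.card ≤ k) : Sparse k x := by
  refine le_trans ?_ hc
  rw [← Set.ncard_coe_finset T]
  exact Set.ncard_le_ncard (fun i hi => hs i hi) T.finite_toSet

lemma sparse_rst {T : Finset (Fin N)} {k : ℕ} (hc : T.card ≤ k) (x : Fin N → ℝ) :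
    Sparse k (rst T x) := by
  apply sparse_of_subset_finset (fun i hi => ?_) hc
  by_contra h; simp [rst, h] at hi

lemma sparse_add {x y : Fin N → ℝ} {k l : ℕ} (hx : Sparse k x) (hy : Sparse l y) :
    Sparse (k + l) (x + y) := by
  unfold Sparse at *
  refine le_trans (le_trans (Set.ncard_le_ncard (fun i hi => ?_)
    ((Set.toFinite _).union (Set.toFinite _)))
    (Set.ncard_union_le {i | x i ≠ 0} {i | y i ≠ 0})) (add_le_add hx hy)
  · by_contra h
    simp only [Set.mem_union, Set.mem_setOf_eq, not_or, not_not] at h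
    simp only [Set.mem_setOf_eq, Pi.add_apply] at hi
    rw [h.1, h.2, add_zero] at hi; exact hi rfl

lemma sparse_smul {x : Fin N → ℝ} {k : ℕ} (t : ℝ) (hx : Sparse k x) : Sparse k (t • x) := by
  refine le_trans (Set.ncard_le_ncard (fun i hi => ?_) (Set.toFinite _)) hx
  simp only [Set.mem_setOf_eq, Pi.smul_apply, smul_eq_mul] at hi ⊢
  exact fun h => hi (by rw [h, mul_zero])

lemma l2norm_smul (t : ℝ) (x : Fin N → ℝ) : l2norm (t • x) = |t| * l2norm x := by
  unfold l2norm
  rw [← Real.sqrt_sq_eq_abs, ← Real.sqrt_mul (sq_nonneg t)]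
  congr 1
  rw [Finset.mul_sum]
  exact Finset.sum_congr rfl fun i _ => by simp [mul_pow]

/-- ℓ¹ ≤ √card · ℓ² for vectors supported on T -/
lemma l1_le_sqrt_card_mul_l2 {T : Finset (Fin N)} {x : Fin N → ℝ}
    (hs : ∀ i, x i ≠ 0 → i ∈ T) : l1norm x ≤ Real.sqrt T.card * l2norm x := by
  have h1 : l1norm x = ∑ i ∈ T, |x i| := by
    refine (Finset.sum_subset (Finset.subset_univ T) (fun i _ hi => ?_)).symm
    rcases eq_or_ne (x i) 0 with h | h
    · simp [h]
    · exact absurd (hs i h) hi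
  have h2 := Finset.sum_mul_sq_le_sq_mul_sq T (fun _ => (1:ℝ)) (fun i => |x i|)
  simp only [one_pow, one_mul, Finset.sum_const, nsmul_eq_mul, mul_one, sq_abs] at h2
  have h3 : (∑ i ∈ T, |x i|) ≤ Real.sqrt ((T.card : ℝ) * ∑ i ∈ T, x i ^ 2) :=
    calc (∑ i ∈ T, |x i|) ≤ abs (∑ i ∈ T, |x i|) := le_abs_self _
      _ = Real.sqrt ((∑ i ∈ T, |x i|) ^ 2) := (Real.sqrt_sq_eq_abs _).symm
      _ ≤ _ := Real.sqrt_le_sqrt h2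
  rw [h1]
  refine le_trans h3 ?_
  rw [Real.sqrt_mul (Nat.cast_nonneg _)]
  apply mul_le_mul_of_nonneg_left _ (Real.sqrt_nonneg _)
  apply Real.sqrt_le_sqrt
  apply Finset.sum_le_sum_of_subset_of_nonneg (Finset.subset_univ T)
  intro i _ _; exact sq_nonneg _

/-- ℓ² ≤ √card · max bound, for vectors supported on T with entries bounded by c -/
lemma l2_le_sqrt_card_mul_bound {T : Finset (Fin N)} {x : Fin N → ℝ} {c : ℝ} (hc : 0 ≤ c)
    (hs : ∀ i, x i ≠ 0 → i ∈ T) (hb : ∀ i, |x i| ≤ c) :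
    l2norm x ≤ Real.sqrt T.card * c := by
  have : ∑ i, x i ^ 2 ≤ T.card * c ^ 2 := by
    rw [← Finset.sum_subset (Finset.subset_univ T) (fun i _ hi => by
      rcases eq_or_ne (x i) 0 with h | h
      · simp [h]
      · exact absurd (hs i h) hi)]
    calc ∑ i ∈ T, x i ^ 2 ≤ ∑ _i ∈ T, c ^ 2 := Finset.sum_le_sum fun i _ => by
          rw [← sq_abs]; exact pow_le_pow_left₀ (abs_nonneg _) (hb i) 2
      _ = T.card * c ^ 2 := by rw [Finset.sum_const, nsmul_eq_mul]
  calc l2norm x ≤ Real.sqrt (T.card * c ^ 2) := Real.sqrt_le_sqrt this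
    _ = Real.sqrt T.card * c := by
        rw [Real.sqrt_mul (Nat.cast_nonneg _), Real.sqrt_sq hc]

lemma l2norm_pos {x : Fin N → ℝ} (hx : x ≠ 0) : 0 < l2norm x := by
  rcases (l2norm_nonneg x).lt_or_eq with h | h
  · exact h
  exfalso; apply hx; funext i
  have h2 : ∑ j, x j ^ 2 = 0 := by
    have hs := sq_l2norm x; rw [← h] at hs; simpa using hs.symm
  have h3 := (Finset.sum_eq_zero_iff_of_nonneg (fun j _ => sq_nonneg (x j))).1 h2 i
    (Finset.mem_univ i)
  exact pow_eq_zero_iff (by norm_num) |>.1 h3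

section RIP
variable {n : ℕ} {k : ℕ} {δ : ℝ} {Φ : Matrix (Fin n) (Fin N) ℝ}

lemma RIP_upper (hδ : 0 ≤ δ) {m : ℕ} (hΦ : RIP Φ m δ) {u : Fin N → ℝ} (hu : Sparse m u) :
    l2norm (Φ.mulVec u) ≤ Real.sqrt (1 + δ) * l2norm u := by
  have h := (hΦ u hu).2
  calc l2norm (Φ.mulVec u) ≤ Real.sqrt ((1 + δ) * ∑ i, u i ^ 2) := Real.sqrt_le_sqrt h
    _ = Real.sqrt (1 + δ) * l2norm u := Real.sqrt_mul (by linarith) _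

lemma RIP_lower {m : ℕ} (hΦ : RIP Φ m δ) {u : Fin N → ℝ} (hu : Sparse m u) :
    (1 - δ) * l2norm u ^ 2 ≤ l2norm (Φ.mulVec u) ^ 2 := by
  rw [sq_l2norm, sq_l2norm]; exact (hΦ u hu).1

lemma sparse_neg {x : Fin N → ℝ} (hx : Sparse k x) : Sparse k (-x) := by
  have : -x = (-1 : ℝ) • x := by funext i; simp
  rw [this]; exact sparse_smul _ hx

lemma RO_half (hΦ : RIP Φ (2 * k) δ) {u w : Fin N → ℝ}
    (hu : Sparse k u) (hw : Sparse k w) (hd : ∀ i, u i = 0 ∨ w i = 0) :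
    |∑ i, Φ.mulVec u i * Φ.mulVec w i| ≤ δ * (l2norm u ^ 2 + l2norm w ^ 2) / 2 := by
  have hsp1 : Sparse (2 * k) (u + w) := by rw [two_mul]; exact sparse_add hu hw
  have hsp2 : Sparse (2 * k) (u + -w) := by rw [two_mul]; exact sparse_add hu (sparse_neg hw)
  have hS1 : ∑ i, (u + w) i ^ 2 = l2norm u ^ 2 + l2norm w ^ 2 := by
    rw [sq_l2norm, sq_l2norm, ← Finset.sum_add_distrib]
    refine Finset.sum_congr rfl fun i _ => ?_
    rcases hd i with h | h <;> simp [h]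
  have hS2 : ∑ i, (u + -w) i ^ 2 = l2norm u ^ 2 + l2norm w ^ 2 := by
    rw [sq_l2norm, sq_l2norm, ← Finset.sum_add_distrib]
    refine Finset.sum_congr rfl fun i _ => ?_
    rcases hd i with h | h <;> simp [h]
  have h1 := hΦ _ hsp1
  have h2 := hΦ _ hsp2
  rw [hS1] at h1; rw [hS2] at h2
  have hkey : ∑ i, Φ.mulVec (u + w) i ^ 2 - ∑ i, Φ.mulVec (u + -w) i ^ 2
      = 4 * ∑ i, Φ.mulVec u i * Φ.mulVec w i := by
    rw [Finset.mul_sum, ← Finset.sum_sub_distrib]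
    refine Finset.sum_congr rfl fun i _ => ?_
    have e1 : Φ.mulVec (u + w) i = Φ.mulVec u i + Φ.mulVec w i := by
      rw [Matrix.mulVec_add]; rfl
    have e2 : Φ.mulVec (u + -w) i = Φ.mulVec u i - Φ.mulVec w i := by
      rw [Matrix.mulVec_add, Matrix.mulVec_neg]; simp [sub_eq_add_neg]
    rw [e1, e2]; ring
  rw [abs_le]
  constructor <;> nlinarith [h1.1, h1.2, h2.1, h2.2]

lemma restricted_orthogonality (hδ : 0 ≤ δ) (hΦ : RIP Φ (2 * k) δ) {u w : Fin N → ℝ}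
    (hu : Sparse k u) (hw : Sparse k w) (hd : ∀ i, u i = 0 ∨ w i = 0) :
    |∑ i, Φ.mulVec u i * Φ.mulVec w i| ≤ δ * l2norm u * l2norm w := by
  rcases eq_or_ne u 0 with rfl | hune
  · simp [Matrix.mulVec_zero, l2norm]
  rcases eq_or_ne w 0 with rfl | hwne
  · simp [Matrix.mulVec_zero, l2norm]
  set a := l2norm u with ha
  set b := l2norm w with hb
  have hapos : 0 < a := l2norm_pos hune
  have hbpos : 0 < b := l2norm_pos hwne
  set t := Real.sqrt (b / a) with ht
  have htpos : 0 < t := Real.sqrt_pos.2 (div_pos hbpos hapos)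
  have key := RO_half hΦ (sparse_smul t hu) (sparse_smul t⁻¹ hw)
    (fun i => by rcases hd i with h | h <;> [left; right] <;> simp [h])
  have hdot : ∑ i, Φ.mulVec (t • u) i * Φ.mulVec (t⁻¹ • w) i
      = ∑ i, Φ.mulVec u i * Φ.mulVec w i := by
    refine Finset.sum_congr rfl fun i _ => ?_
    rw [Matrix.mulVec_smul, Matrix.mulVec_smul]
    simp only [Pi.smul_apply, smul_eq_mul]
    field_simp
  rw [hdot] at key
  have hnu : l2norm (t • u) = t * a := by rw [l2norm_smul, abs_of_pos htpos, ha]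
  have hnw : l2norm (t⁻¹ • w) = t⁻¹ * b := by
    rw [l2norm_smul, abs_of_pos (inv_pos.2 htpos), hb]
  rw [hnu, hnw] at key
  have ht2 : t ^ 2 = b / a := Real.sq_sqrt (le_of_lt (div_pos hbpos hapos))
  have heq : δ * ((t * a) ^ 2 + (t⁻¹ * b) ^ 2) / 2 = δ * a * b := by
    have hti : t⁻¹ ^ 2 = a / b := by
      rw [inv_pow, ht2, inv_div]
    rw [mul_pow, mul_pow, ht2, hti]
    field_simp
    ring
  rw [heq] at key
  exact key
end RIP

/-- the support of a vector as a finset -/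
noncomputable def supp {N : ℕ} (v : Fin N → ℝ) : Finset (Fin N) :=
  Finset.univ.filter (fun i => v i ≠ 0)

lemma mem_supp {v : Fin N → ℝ} {i : Fin N} : i ∈ supp v ↔ v i ≠ 0 := by
  simp [supp]

/-- there is a set of `m` largest-in-magnitude coordinates inside the support -/
lemma exists_topm (v : Fin N → ℝ) :
    ∀ m : ℕ, m ≤ (supp v).card →
    ∃ S : Finset (Fin N), S ⊆ supp v ∧ S.card = m ∧
      ∀ i ∈ S, ∀ j, j ∉ S → |v j| ≤ |v i| := by
  intro m
  induction m with
  | zero => exact fun _ => ⟨∅, by simp, rfl, by simp⟩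
  | succ m ih =>
    intro hm
    obtain ⟨S, hsub, hcard, hmax⟩ := ih (le_trans (Nat.le_succ m) hm)
    have hne : (supp v \ S).Nonempty := by
      rw [← Finset.card_pos, Finset.card_sdiff_of_subset hsub, hcard]
      omega
    obtain ⟨j₀, hj₀, hjmax⟩ := Finset.exists_max_image (supp v \ S) (fun j => |v j|) hne
    have hj₀S : j₀ ∉ S := (Finset.mem_sdiff.1 hj₀).2
    refine ⟨insert j₀ S, ?_, ?_, ?_⟩
    · exact Finset.insert_subset (Finset.mem_sdiff.1 hj₀).1 hsub
    · rw [Finset.card_insert_of_notMem hj₀S, hcard]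
    · intro i hi j hj
      have hjS : j ∉ S := fun h => hj (Finset.mem_insert_of_mem h)
      rcases Finset.mem_insert.1 hi with rfl | hiS
      · by_cases hjsupp : j ∈ supp v
        · exact hjmax j (Finset.mem_sdiff.2 ⟨hjsupp, hjS⟩)
        · rw [show v j = 0 by simpa [mem_supp] using hjsupp]
          simp [abs_nonneg]
      · exact hmax i hiS j hjS

lemma l1norm_rst_add_compl (T : Finset (Fin N)) (x : Fin N → ℝ) :
    l1norm (rst T x) + l1norm (rst Tᶜ x) = l1norm x := by
  unfold l1norm
  rw [← Finset.sum_add_distrib]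
  refine Finset.sum_congr rfl fun i _ => ?_
  by_cases h : i ∈ T <;> simp [rst, h]

/-- The block decomposition lemma, with telescoping ℓ² bound. -/
lemma decomp {k : ℕ} (hk : 0 < k) :
    ∀ (M : ℕ) (v : Fin N → ℝ), (supp v).card ≤ M → ∀ c : ℝ, 0 ≤ c → (∀ i, |v i| ≤ c) →
    ∃ l : List (Finset (Fin N)),
      l.Pairwise Disjoint ∧
      (∀ T ∈ l, T.card ≤ k) ∧
      (∀ T ∈ l, ∀ i ∈ T, v i ≠ 0) ∧
      (∀ i, v i ≠ 0 → ∃ T ∈ l, i ∈ T) ∧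
      (l.map (fun T => l2norm (rst T v))).sum
        ≤ Real.sqrt k * c + (Real.sqrt k)⁻¹ * l1norm v := by
  intro M
  induction M with
  | zero =>
    intro v hM c hc _
    refine ⟨[], List.Pairwise.nil, by simp, by simp, fun i hi => absurd ?_ hi, by
      simp
      have : 0 ≤ (Real.sqrt k)⁻¹ * l1norm v := by
        apply mul_nonneg (inv_nonneg.2 (Real.sqrt_nonneg _)) (l1norm_nonneg v)
      nlinarith [Real.sqrt_nonneg (k:ℝ)]⟩
    by_contra h
    have : i ∈ supp v := mem_supp.2 h
    have := Finset.card_pos.2 ⟨i, this⟩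
    omega
  | succ M ih =>
    intro v hM c hc hb
    by_cases hcase : (supp v).card ≤ k
    -- single block: the whole support
    · refine ⟨[supp v], List.pairwise_singleton _ _, by simpa using hcase,
        fun T hT i hiT => by rw [List.mem_singleton.1 hT] at hiT; exact mem_supp.1 hiT, fun i hi => ⟨supp v, by simp, mem_supp.2 hi⟩, ?_⟩
      simp only [List.map_cons, List.map_nil, List.sum_cons, List.sum_nil, add_zero]
      have h1 : l2norm (rst (supp v) v) ≤ Real.sqrt ((supp v).card) * c := by
        apply l2_le_sqrt_card_mul_bound hc
        · intro i hi
          simp only [rst] at hi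
          by_cases h : i ∈ supp v
          · exact h
          · simp [h] at hi
        · intro i
          simp only [rst]
          by_cases h : i ∈ supp v <;> simp [h] <;> [exact hb i; exact hc]
      have h2 : Real.sqrt ((supp v).card) ≤ Real.sqrt k :=
        Real.sqrt_le_sqrt (by exact_mod_cast hcase)
      have h3 : 0 ≤ (Real.sqrt k)⁻¹ * l1norm v :=
        mul_nonneg (inv_nonneg.2 (Real.sqrt_nonneg _)) (l1norm_nonneg v)
      calc l2norm (rst (supp v) v) ≤ Real.sqrt ((supp v).card) * c := h1
        _ ≤ Real.sqrt k * c := mul_le_mul_of_nonneg_right h2 hc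
        _ ≤ _ := by linarith
    -- recursive case: peel off the k largest coordinates
    · push_neg at hcase
      obtain ⟨S, hsub, hScard, hmax⟩ := exists_topm v k (le_of_lt hcase)
      have hSne : S.Nonempty := Finset.card_pos.1 (hScard ▸ hk)
      obtain ⟨i₀, hi₀, hmin⟩ := Finset.exists_min_image S (fun i => |v i|) hSne
      set c' := |v i₀| with hc'
      have hc'0 : 0 ≤ c' := abs_nonneg _
      set v' := rst Sᶜ v with hv'
      have hv'S : ∀ i ∈ S, v' i = 0 := fun i hi => by simp [hv', rst, hi]
      have hv'nS : ∀ i, i ∉ S → v' i = v i := fun i hi => by simp [hv', rst, hi]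
      have hb' : ∀ i, |v' i| ≤ c' := by
        intro i
        by_cases h : i ∈ S
        · rw [hv'S i h]; simpa using hc'0
        · rw [hv'nS i h]; exact hmax i₀ hi₀ i h
      have hsupp' : supp v' = supp v \ S := by
        ext i
        simp only [mem_supp, Finset.mem_sdiff]
        by_cases h : i ∈ S
        · simp [hv'S i h, h, (mem_supp.1 (hsub h))]
        · simp [hv'nS i h, h, mem_supp]
      have hcard' : (supp v').card ≤ M := by
        rw [hsupp', Finset.card_sdiff_of_subset hsub, hScard]
        omega
      obtain ⟨l', hdisj', hcards', hsupps', hcover', hsum'⟩ := ih v' hcard' c' hc'0 hb'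
      have hl'sub : ∀ T ∈ l', ∀ i ∈ T, i ∉ S := by
        intro T hT i hiT hiS
        exact hsupps' T hT i hiT (hv'S i hiS)
      have hrst_eq : ∀ T ∈ l', rst T v' = rst T v := by
        intro T hT
        funext i
        by_cases h : i ∈ T
        · simp only [rst, h, if_true]; exact hv'nS i (hl'sub T hT i h)
        · simp [rst, h]
      refine ⟨S :: l', ?_, ?_, ?_, ?_, ?_⟩
      · refine List.Pairwise.cons (fun T hT => Finset.disjoint_left.2
          (fun i hiS hiT => hl'sub T hT i hiT hiS)) hdisj'
      · intro T hT
        rcases List.mem_cons.1 hT with rfl | h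
        · exact le_of_eq hScard
        · exact hcards' T h
      · intro T hT i hiT
        rcases List.mem_cons.1 hT with rfl | h
        · exact mem_supp.1 (hsub hiT)
        · intro h0
          exact hsupps' T h i hiT (by rw [hv'nS i (hl'sub T h i hiT), h0])
      · intro i hi
        by_cases h : i ∈ S
        · exact ⟨S, List.mem_cons_self, h⟩
        · obtain ⟨T, hT, hiT⟩ := hcover' i (by rw [hv'nS i h]; exact hi)
          exact ⟨T, List.mem_cons_of_mem _ hT, hiT⟩
      · -- the key sum estimate
        have hsqk : (0:ℝ) < Real.sqrt k := Real.sqrt_pos.2 (by exact_mod_cast hk)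
        have hmapeq : (l'.map (fun T => l2norm (rst T v))).sum
            = (l'.map (fun T => l2norm (rst T v'))).sum := by
          congr 1
          apply List.map_congr_left
          intro T hT
          rw [hrst_eq T hT]
        have hhead : l2norm (rst S v) ≤ Real.sqrt k * c := by
          rw [← hScard]
          apply l2_le_sqrt_card_mul_bound hc
          · intro i hi
            simp only [rst] at hi
            by_cases h : i ∈ S
            · exact h
            · simp [h] at hi
          · intro i
            simp only [rst]
            by_cases h : i ∈ S <;> simp [h] <;> [exact hb i; exact hc]
        have hkc' : (k : ℝ) * c' ≤ l1norm (rst S v) := by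
          have h1 : S.card • c' ≤ ∑ i ∈ S, |v i| :=
            Finset.card_nsmul_le_sum S _ c' (fun i hi => hmin i hi)
          have h2 : l1norm (rst S v) = ∑ i ∈ S, |v i| := by
            unfold l1norm
            rw [← Finset.sum_subset (Finset.subset_univ S) (fun i _ hi => by simp [rst, hi])]
            exact Finset.sum_congr rfl fun i hi => by simp [rst, hi]
          rw [h2, ← hScard]
          simpa [nsmul_eq_mul] using h1
        have hc'bound : Real.sqrt k * c' ≤ (Real.sqrt k)⁻¹ * l1norm (rst S v) := by
          have hkk : Real.sqrt k * Real.sqrt k = (k : ℝ) :=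
            Real.mul_self_sqrt (Nat.cast_nonneg _)
          calc Real.sqrt k * c'
              = (Real.sqrt k)⁻¹ * ((Real.sqrt k * Real.sqrt k) * c') := by
                rw [← mul_assoc, ← mul_assoc, inv_mul_cancel₀ (ne_of_gt hsqk), one_mul]
            _ = (Real.sqrt k)⁻¹ * ((k : ℝ) * c') := by rw [hkk]
            _ ≤ (Real.sqrt k)⁻¹ * l1norm (rst S v) :=
                mul_le_mul_of_nonneg_left hkc' (inv_nonneg.2 (le_of_lt hsqk))
        have hl1 : l1norm (rst S v) + l1norm v' = l1norm v := l1norm_rst_add_compl S v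
        simp only [List.map_cons, List.sum_cons]
        rw [hmapeq]
        calc l2norm (rst S v) + (l'.map (fun T => l2norm (rst T v'))).sum
            ≤ Real.sqrt k * c + (Real.sqrt k * c' + (Real.sqrt k)⁻¹ * l1norm v') :=
              add_le_add hhead hsum'
          _ ≤ Real.sqrt k * c + ((Real.sqrt k)⁻¹ * l1norm (rst S v)
                + (Real.sqrt k)⁻¹ * l1norm v') := by
              have := hc'bound; linarith
          _ = Real.sqrt k * c + (Real.sqrt k)⁻¹ * l1norm v := by
              rw [← hl1]; ring

lemma sum_map_rst (v : Fin N → ℝ) :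
    ∀ l : List (Finset (Fin N)), l.Pairwise Disjoint →
    (∀ i, v i ≠ 0 → ∃ T ∈ l, i ∈ T) → (l.map (fun T => rst T v)).sum = v := by
  intro l
  induction l generalizing v with
  | nil =>
    intro _ hcover
    funext i
    simp only [List.map_nil, List.sum_nil, Pi.zero_apply]
    by_contra h
    obtain ⟨T, hT, _⟩ := hcover i (Ne.symm h)
    exact absurd hT List.not_mem_nil
  | cons T l ihl =>
    intro hdisj hcover
    have hdT : ∀ T' ∈ l, Disjoint T T' := fun T' h => (List.pairwise_cons.1 hdisj).1 T' h
    have htail := (List.pairwise_cons.1 hdisj).2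
    set v' := rst Tᶜ v with hv'
    have hcover' : ∀ i, v' i ≠ 0 → ∃ T' ∈ l, i ∈ T' := by
      intro i hi
      have hiT : i ∉ T := by
        intro h; apply hi; simp [hv', rst, h]
      have hvi : v i ≠ 0 := by
        intro h; apply hi; simp [hv', rst, h]
      obtain ⟨T', hT', hiT'⟩ := hcover i hvi
      rcases List.mem_cons.1 hT' with rfl | h
      · exact absurd hiT' hiT
      · exact ⟨T', h, hiT'⟩
    have hmapeq : ∀ T' ∈ l, rst T' v' = rst T' v := by
      intro T' hT'
      funext i
      by_cases h : i ∈ T'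
      · have hiT : i ∉ T := Finset.disjoint_right.1 (hdT T' hT') h
        simp [rst, h, hiT, hv']
      · simp [rst, h]
    have ih := ihl v' htail hcover'
    simp only [List.map_cons, List.sum_cons]
    have : (l.map (fun T' => rst T' v)).sum = v' := by
      rw [← ih]
      congr 1
      apply List.map_congr_left
      intro T' hT'
      exact (hmapeq T' hT').symm
    rw [this, hv']
    exact rst_add_compl T v

lemma l2norm_zero : l2norm (0 : Fin N → ℝ) = 0 := by simp [l2norm]

lemma l2norm_list_sum (l : List (Fin N → ℝ)) : l2norm l.sum ≤ (l.map l2norm).sum := by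
  induction l with
  | nil => simp [l2norm_zero]
  | cons a l ih =>
    simp only [List.sum_cons, List.map_cons]
    exact le_trans (l2norm_add_le a l.sum) (by linarith)

lemma dot_mulVec_list_sum {n : ℕ} (Φ : Matrix (Fin n) (Fin N) ℝ) (a : Fin n → ℝ)
    (l : List (Fin N → ℝ)) :
    ∑ i, a i * Φ.mulVec l.sum i = (l.map (fun w => ∑ i, a i * Φ.mulVec w i)).sum := by
  induction l with
  | nil => simp [Matrix.mulVec_zero]
  | cons w l ih =>
    simp only [List.sum_cons, List.map_cons]
    rw [← ih, ← Finset.sum_add_distrib]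
    refine Finset.sum_congr rfl fun i _ => ?_
    rw [Matrix.mulVec_add]
    simp only [Pi.add_apply]
    ring

lemma l1_rst (T : Finset (Fin N)) (y : Fin N → ℝ) : l1norm (rst T y) = ∑ i ∈ T, |y i| := by
  unfold l1norm
  rw [← Finset.sum_subset (Finset.subset_univ T) (fun i _ hi => by simp [rst, hi])]
  exact Finset.sum_congr rfl fun i hi => by simp [rst, hi]

/-- Top-level decomposition: the largest-k block plus a tail with controlled ℓ² sum. -/
lemma decomp_top {k : ℕ} (hk : 0 < k) (v : Fin N → ℝ) :
    ∃ (T₁ : Finset (Fin N)) (l : List (Finset (Fin N))),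
      (T₁ :: l).Pairwise Disjoint ∧
      T₁.card ≤ k ∧ (∀ T ∈ l, T.card ≤ k) ∧
      (∀ i ∈ T₁, v i ≠ 0) ∧ (∀ T ∈ l, ∀ i ∈ T, v i ≠ 0) ∧
      (∀ i, v i ≠ 0 → ∃ T ∈ T₁ :: l, i ∈ T) ∧
      (l.map (fun T => l2norm (rst T v))).sum ≤ (Real.sqrt k)⁻¹ * l1norm v := by
  have hsqk : (0:ℝ) < Real.sqrt k := Real.sqrt_pos.2 (by exact_mod_cast hk)
  by_cases hcase : (supp v).card ≤ k
  · refine ⟨supp v, [], List.pairwise_singleton _ _, hcase, by simp,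
      fun i hi => mem_supp.1 hi, by simp, fun i hi => ⟨supp v, by simp, mem_supp.2 hi⟩, ?_⟩
    simp only [List.map_nil, List.sum_nil]
    exact mul_nonneg (inv_nonneg.2 (le_of_lt hsqk)) (l1norm_nonneg v)
  · push_neg at hcase
    obtain ⟨S, hsub, hScard, hmax⟩ := exists_topm v k (le_of_lt hcase)
    have hSne : S.Nonempty := Finset.card_pos.1 (hScard ▸ hk)
    obtain ⟨i₀, hi₀, hmin⟩ := Finset.exists_min_image S (fun i => |v i|) hSne
    set c' := |v i₀| with hc'
    have hc'0 : 0 ≤ c' := abs_nonneg _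
    set v' := rst Sᶜ v with hv'
    have hv'S : ∀ i ∈ S, v' i = 0 := fun i hi => by simp [hv', rst, hi]
    have hv'nS : ∀ i, i ∉ S → v' i = v i := fun i hi => by simp [hv', rst, hi]
    have hb' : ∀ i, |v' i| ≤ c' := by
      intro i
      by_cases h : i ∈ S
      · rw [hv'S i h]; simpa using hc'0
      · rw [hv'nS i h]; exact hmax i₀ hi₀ i h
    obtain ⟨l, hdisj, hcards, hsupps, hcover, hsum⟩ :=
      decomp hk (supp v').card v' le_rfl c' hc'0 hb'
    have hl'sub : ∀ T ∈ l, ∀ i ∈ T, i ∉ S := by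
      intro T hT i hiT hiS
      exact hsupps T hT i hiT (hv'S i hiS)
    have hrst_eq : ∀ T ∈ l, rst T v' = rst T v := by
      intro T hT
      funext i
      by_cases h : i ∈ T
      · simp only [rst, h, if_true]; exact hv'nS i (hl'sub T hT i h)
      · simp [rst, h]
    refine ⟨S, l, ?_, le_of_eq hScard, hcards, fun i hi => mem_supp.1 (hsub hi), ?_, ?_, ?_⟩
    · exact List.Pairwise.cons (fun T hT => Finset.disjoint_left.2
        (fun i hiS hiT => hl'sub T hT i hiT hiS)) hdisj
    · intro T hT i hiT h0
      exact hsupps T hT i hiT (by rw [hv'nS i (hl'sub T hT i hiT), h0])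
    · intro i hi
      by_cases h : i ∈ S
      · exact ⟨S, List.mem_cons_self, h⟩
      · obtain ⟨T, hT, hiT⟩ := hcover i (by rw [hv'nS i h]; exact hi)
        exact ⟨T, List.mem_cons_of_mem _ hT, hiT⟩
    · have hmapeq : (l.map (fun T => l2norm (rst T v))).sum
          = (l.map (fun T => l2norm (rst T v'))).sum := by
        congr 1
        apply List.map_congr_left
        intro T hT
        rw [hrst_eq T hT]
      have hkc' : (k : ℝ) * c' ≤ l1norm (rst S v) := by
        have h1 : S.card • c' ≤ ∑ i ∈ S, |v i| :=
          Finset.card_nsmul_le_sum S _ c' (fun i hi => hmin i hi)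
        rw [l1_rst, ← hScard]
        simpa [nsmul_eq_mul] using h1
      have hkk : Real.sqrt k * Real.sqrt k = (k : ℝ) :=
        Real.mul_self_sqrt (Nat.cast_nonneg _)
      have hc'bound : Real.sqrt k * c' ≤ (Real.sqrt k)⁻¹ * l1norm (rst S v) :=
        calc Real.sqrt k * c'
            = (Real.sqrt k)⁻¹ * ((Real.sqrt k * Real.sqrt k) * c') := by
              rw [← mul_assoc, ← mul_assoc, inv_mul_cancel₀ (ne_of_gt hsqk), one_mul]
          _ = (Real.sqrt k)⁻¹ * ((k : ℝ) * c') := by rw [hkk]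
          _ ≤ (Real.sqrt k)⁻¹ * l1norm (rst S v) :=
              mul_le_mul_of_nonneg_left hkc' (inv_nonneg.2 (le_of_lt hsqk))
      have hl1 : l1norm (rst S v) + l1norm v' = l1norm v := l1norm_rst_add_compl S v
      rw [hmapeq]
      calc (l.map (fun T => l2norm (rst T v'))).sum
          ≤ Real.sqrt k * c' + (Real.sqrt k)⁻¹ * l1norm v' := hsum
        _ ≤ (Real.sqrt k)⁻¹ * l1norm (rst S v) + (Real.sqrt k)⁻¹ * l1norm v' := by linarith
        _ = (Real.sqrt k)⁻¹ * l1norm v := by rw [← hl1]; ring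

lemma list_sum_map_le {α : Type*} (l : List α) (f g : α → ℝ) (h : ∀ a ∈ l, f a ≤ g a) :
    (l.map f).sum ≤ (l.map g).sum := by
  induction l with
  | nil => simp
  | cons a l ih =>
    simp only [List.map_cons, List.sum_cons]
    exact add_le_add (h a (List.mem_cons_self))
      (ih fun b hb => h b (List.mem_cons_of_mem _ hb))

lemma list_sum_map_const_mul {α : Type*} (l : List α) (c : ℝ) (g : α → ℝ) :
    (l.map (fun a => c * g a)).sum = c * (l.map g).sum := by
  induction l with
  | nil => simp
  | cons a l ih => simp only [List.map_cons, List.sum_cons, ih]; ring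

set_option maxHeartbeats 2000000 in
/-- Noisy recovery under RIP: if `δ_{2k} < √2 - 1` and `y = Φ x + z` with `‖z‖₂ ≤ ε`, any
ℓ¹-minimizer `x*` subject to `‖y - Φ w‖₂ ≤ ε` satisfies
`‖x* - x‖₂ ≤ C₀ k^{-1/2} ‖x - x_(k)‖₁ + C₁ ε`, where `C₀, C₁` depend only on `δ_{2k}`. -/
theorem noisy_recovery_under_RIP (δ : ℝ) (hδpos : 0 < δ) (hδ : δ < Real.sqrt 2 - 1) :
    ∃ C₀ C₁ : ℝ, 0 < C₀ ∧ 0 < C₁ ∧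
      ∀ (n N k : ℕ), 0 < k →
        ∀ Φ : Matrix (Fin n) (Fin N) ℝ, RIP Φ (2 * k) δ →
          ∀ (x xk xstar : Fin N → ℝ) (z : Fin n → ℝ) (ε : ℝ), IsBestKTerm k x xk →
            l2norm z ≤ ε →
            l2norm (Φ.mulVec x + z - Φ.mulVec xstar) ≤ ε →
            (∀ w : Fin N → ℝ, l2norm (Φ.mulVec x + z - Φ.mulVec w) ≤ ε →
              l1norm xstar ≤ l1norm w) →
            l2norm (xstar - x) ≤ C₀ * (Real.sqrt k)⁻¹ * l1norm (x - xk) + C₁ * ε := by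
  have hs2 : Real.sqrt 2 * Real.sqrt 2 = 2 := Real.mul_self_sqrt (by norm_num)
  have hs2pos : 0 < Real.sqrt 2 := Real.sqrt_pos.2 (by norm_num)
  have hδ1 : δ < 1 := by nlinarith
  have h1δ : 0 < 1 - δ := by linarith
  set ρ := Real.sqrt 2 * δ / (1 - δ) with hρ
  have hρpos : 0 < ρ := div_pos (mul_pos hs2pos hδpos) h1δ
  have hρ1 : ρ < 1 := by
    rw [hρ, div_lt_one h1δ]
    nlinarith
  have h1ρ : 0 < 1 - ρ := by linarith
  have hsd : 0 < Real.sqrt (1 + δ) := Real.sqrt_pos.2 (by linarith)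
  set α := 2 * Real.sqrt (1 + δ) / (1 - δ) with hα
  have hαpos : 0 < α := div_pos (by linarith) h1δ
  refine ⟨2 + 4 * ρ / (1 - ρ), 2 * α / (1 - ρ), by positivity, by positivity, ?_⟩
  intro n N k hk Φ hΦ x xk xstar z ε hbest hz hfeas hmin
  obtain ⟨S, hScard, hxkS, hxkSc, -⟩ := hbest
  have hSk : S.card ≤ k := by rw [hScard]; exact min_le_left k N
  have hε0 : 0 ≤ ε := le_trans (l2norm_nonneg z) hz
  have hsqk : (0:ℝ) < Real.sqrt k := Real.sqrt_pos.2 (by exact_mod_cast hk)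
  set h := xstar - x with hh
  set v := rst Sᶜ h with hv
  obtain ⟨T₁, l, hdisj, hT₁k, hlk, hT₁supp, hlsupp, hcover, hSle⟩ := decomp_top hk v
  set h0 := rst S h with hh0
  set v1 := rst T₁ v with hv1
  set h01 := h0 + v1 with hh01
  set Sig := (l.map (fun T => l2norm (rst T v))).sum with hSig
  set X := l2norm h01 with hX
  set E := (Real.sqrt k)⁻¹ * l1norm (x - xk) with hE
  have hX0 : 0 ≤ X := l2norm_nonneg _
  have hSig0 : 0 ≤ Sig := by
    apply List.sum_nonneg
    intro a ha
    obtain ⟨T, _, rfl⟩ := List.mem_map.1 ha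
    exact l2norm_nonneg _
  have hE0 : 0 ≤ E :=
    mul_nonneg (inv_nonneg.2 (le_of_lt hsqk)) (l1norm_nonneg _)
  have hvSc : ∀ i ∈ S, v i = 0 := fun i hi => by simp [hv, rst, hi]
  have hT₁S : ∀ i ∈ T₁, i ∉ S := fun i hi hiS => hT₁supp i hi (hvSc i hiS)
  have hdisj0 : ∀ i, h0 i = 0 ∨ v1 i = 0 := by
    intro i
    by_cases hiS : i ∈ S
    · right
      by_cases hiT : i ∈ T₁
      · exact absurd hiS (hT₁S i hiT)
      · simp [hv1, rst, hiT]
    · left; simp [hh0, rst, hiS]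
  have hsq01 : X ^ 2 = l2norm h0 ^ 2 + l2norm v1 ^ 2 := by
    rw [hX, sq_l2norm, sq_l2norm, sq_l2norm, ← Finset.sum_add_distrib]
    refine Finset.sum_congr rfl fun i _ => ?_
    rcases hdisj0 i with h' | h' <;> simp [hh01, h']
  have hh0X : l2norm h0 ≤ X := by
    nlinarith only [hsq01, l2norm_nonneg h0, l2norm_nonneg v1, hX0, sq_nonneg (l2norm v1)]
  have hsp0 : Sparse k h0 := sparse_rst hSk h
  have hsp1 : Sparse k v1 := sparse_rst hT₁k v
  have hsp01 : Sparse (2 * k) h01 := by rw [two_mul]; exact sparse_add hsp0 hsp1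
  -- decomposition of h
  set rest := (l.map (fun T => rst T v)).sum with hrest
  have hvdec : v1 + rest = v := by
    have := sum_map_rst v (T₁ :: l) hdisj hcover
    simpa [List.map_cons, List.sum_cons] using this
  have hhdec : h = h01 + rest := by
    have h1 : h0 + v = h := rst_add_compl S h
    rw [← hvdec] at h1
    rw [hh01, ← h1]; abel
  have hrest2 : l2norm rest ≤ Sig := by
    refine le_trans (l2norm_list_sum _) (le_of_eq ?_)
    rw [List.map_map]
    rfl
  -- ‖Φh‖ ≤ 2ε
  have hΦh : l2norm (Φ.mulVec h) ≤ 2 * ε := by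
    have heq : Φ.mulVec h = z + -(Φ.mulVec x + z - Φ.mulVec xstar) := by
      rw [hh, Matrix.mulVec_sub]; abel
    rw [heq]
    calc l2norm (z + -(Φ.mulVec x + z - Φ.mulVec xstar))
        ≤ l2norm z + l2norm (-(Φ.mulVec x + z - Φ.mulVec xstar)) := l2norm_add_le _ _
      _ = l2norm z + l2norm (Φ.mulVec x + z - Φ.mulVec xstar) := by rw [l2norm_neg]
      _ ≤ ε + ε := add_le_add hz hfeas
      _ = 2 * ε := by ring
  -- cone constraint
  have hxfeas : l2norm (Φ.mulVec x + z - Φ.mulVec x) ≤ ε := by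
    have : Φ.mulVec x + z - Φ.mulVec x = z := by abel
    rw [this]; exact hz
  have hl1min : l1norm xstar ≤ l1norm x := hmin x hxfeas
  have hxstar_eq : ∀ i, xstar i = x i + h i := fun i => by simp [hh]
  have habs1 : ∀ i, |x i| - |h i| ≤ |xstar i| := by
    intro i
    have := abs_add_le (xstar i) (-(h i))
    rw [hxstar_eq i] at this ⊢
    simp only [abs_neg] at this
    have e : x i + h i + -(h i) = x i := by ring
    rw [e] at this
    linarith only [this]
  have habs2 : ∀ i, |h i| - |x i| ≤ |xstar i| := by
    intro i
    have := abs_add_le (xstar i) (-(x i))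
    rw [hxstar_eq i] at this ⊢
    simp only [abs_neg] at this
    have e : x i + h i + -(x i) = h i := by ring
    rw [e] at this
    linarith only [this]
  have hsplitx : ∑ i ∈ S, |x i| + ∑ i ∈ Sᶜ, |x i| = l1norm x :=
    Finset.sum_add_sum_compl S _
  have hsplitxs : ∑ i ∈ S, |xstar i| + ∑ i ∈ Sᶜ, |xstar i| = l1norm xstar :=
    Finset.sum_add_sum_compl S _
  have hA : ∑ i ∈ S, (|x i| - |h i|) ≤ ∑ i ∈ S, |xstar i| :=
    Finset.sum_le_sum fun i _ => habs1 i
  have hB : ∑ i ∈ Sᶜ, (|h i| - |x i|) ≤ ∑ i ∈ Sᶜ, |xstar i| :=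
    Finset.sum_le_sum fun i _ => habs2 i
  rw [Finset.sum_sub_distrib] at hA hB
  have hcone : ∑ i ∈ Sᶜ, |h i| ≤ ∑ i ∈ S, |h i| + 2 * ∑ i ∈ Sᶜ, |x i| := by
    linarith only [hA, hB, hsplitx, hsplitxs, hl1min]
  -- identify the pieces of l1 norms
  have hl1v : l1norm v = ∑ i ∈ Sᶜ, |h i| := by
    rw [hv, l1_rst]
  have hl1h0 : l1norm h0 = ∑ i ∈ S, |h i| := by rw [hh0, l1_rst]
  have he0 : l1norm (x - xk) = ∑ i ∈ Sᶜ, |x i| := by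
    have : x - xk = rst Sᶜ x := by
      funext i
      by_cases hiS : i ∈ S
      · simp [rst, hiS, hxkS i hiS]
      · simp [rst, hiS, hxkSc i hiS]
    rw [this, l1_rst]
  have hl1S : ∑ i ∈ S, |h i| ≤ Real.sqrt k * l2norm h0 := by
    rw [← hl1h0]
    calc l1norm h0 ≤ Real.sqrt S.card * l2norm h0 := by
          apply l1_le_sqrt_card_mul_l2
          intro i hi
          by_contra hiS
          simp [hh0, rst, hiS] at hi
      _ ≤ Real.sqrt k * l2norm h0 :=
          mul_le_mul_of_nonneg_right (Real.sqrt_le_sqrt (by exact_mod_cast hSk))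
            (l2norm_nonneg _)
  have hSigbound : Sig ≤ l2norm h0 + 2 * E := by
    have h1 : Sig ≤ (Real.sqrt k)⁻¹ * l1norm v := hSle
    have h2 : l1norm v ≤ Real.sqrt k * l2norm h0 + 2 * l1norm (x - xk) := by
      rw [hl1v, he0]; linarith only [hcone, hl1S]
    have h3 : (Real.sqrt k)⁻¹ * l1norm v
        ≤ (Real.sqrt k)⁻¹ * (Real.sqrt k * l2norm h0 + 2 * l1norm (x - xk)) :=
      mul_le_mul_of_nonneg_left h2 (inv_nonneg.2 (le_of_lt hsqk))
    have h4 : (Real.sqrt k)⁻¹ * (Real.sqrt k * l2norm h0 + 2 * l1norm (x - xk))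
        = l2norm h0 + 2 * E := by
      rw [hE, mul_add, ← mul_assoc, inv_mul_cancel₀ (ne_of_gt hsqk), one_mul]
      ring
    linarith only [h1, h3, h4]
  -- RIP estimates
  have hlow := RIP_lower hΦ hsp01
  have hup := RIP_upper (le_of_lt hδpos) hΦ hsp01
  -- inner product expansion
  have hinner : ∑ i, Φ.mulVec h01 i * Φ.mulVec h i
      = l2norm (Φ.mulVec h01) ^ 2
        + (l.map (fun T => ∑ i, Φ.mulVec h01 i * Φ.mulVec (rst T v) i)).sum := by
    have e0 : ∀ i, Φ.mulVec h i = Φ.mulVec h01 i + Φ.mulVec rest i := by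
      intro i; rw [hhdec, Matrix.mulVec_add]; rfl
    calc ∑ i, Φ.mulVec h01 i * Φ.mulVec h i
        = ∑ i, (Φ.mulVec h01 i * Φ.mulVec h01 i + Φ.mulVec h01 i * Φ.mulVec rest i) := by
          refine Finset.sum_congr rfl fun i _ => ?_
          rw [e0 i]; ring
      _ = (∑ i, Φ.mulVec h01 i * Φ.mulVec h01 i)
            + ∑ i, Φ.mulVec h01 i * Φ.mulVec rest i := Finset.sum_add_distrib
      _ = l2norm (Φ.mulVec h01) ^ 2
            + (l.map (fun T => ∑ i, Φ.mulVec h01 i * Φ.mulVec (rst T v) i)).sum := by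
          congr 1
          · rw [sq_l2norm]
            exact Finset.sum_congr rfl fun i _ => (pow_two _).symm
          · rw [hrest, dot_mulVec_list_sum, List.map_map]
            rfl
  -- restricted orthogonality bounds on the cross terms
  have hab2 : l2norm h0 + l2norm v1 ≤ Real.sqrt 2 * X := by
    have hnn : 0 ≤ l2norm h0 + l2norm v1 :=
      add_nonneg (l2norm_nonneg _) (l2norm_nonneg _)
    calc l2norm h0 + l2norm v1
        = Real.sqrt ((l2norm h0 + l2norm v1) ^ 2) := (Real.sqrt_sq hnn).symm
      _ ≤ Real.sqrt (2 * X ^ 2) := by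
          apply Real.sqrt_le_sqrt
          calc (l2norm h0 + l2norm v1) ^ 2
              = l2norm h0 ^ 2 + l2norm v1 ^ 2 + 2 * l2norm h0 * l2norm v1 := by ring
            _ ≤ l2norm h0 ^ 2 + l2norm v1 ^ 2 + (l2norm h0 ^ 2 + l2norm v1 ^ 2) := by
                linarith [two_mul_le_add_sq (l2norm h0) (l2norm v1)]
            _ = 2 * X ^ 2 := by rw [hsq01]; ring
      _ = Real.sqrt 2 * X := by
          rw [Real.sqrt_mul (by norm_num), Real.sqrt_sq hX0]
  have hcross : ∀ T ∈ l,
      -(δ * (l2norm h0 + l2norm v1)) * l2norm (rst T v)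
        ≤ ∑ i, Φ.mulVec h01 i * Φ.mulVec (rst T v) i := by
    intro T hT
    have hspT : Sparse k (rst T v) := sparse_rst (hlk T hT) v
    have hd0 : ∀ i, h0 i = 0 ∨ rst T v i = 0 := by
      intro i
      by_cases hiS : i ∈ S
      · right
        by_cases hiT : i ∈ T
        · simp [rst, hiT, hvSc i hiS]
        · simp [rst, hiT]
      · left; simp [hh0, rst, hiS]
    have hd1 : ∀ i, v1 i = 0 ∨ rst T v i = 0 := by
      intro i
      by_cases hiT₁ : i ∈ T₁
      · right
        have : i ∉ T := Finset.disjoint_left.1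
          ((List.pairwise_cons.1 hdisj).1 T hT) hiT₁
        simp [rst, this]
      · left; simp [hv1, rst, hiT₁]
    have hb0 := restricted_orthogonality (le_of_lt hδpos) hΦ hsp0 hspT hd0
    have hb1 := restricted_orthogonality (le_of_lt hδpos) hΦ hsp1 hspT hd1
    have hsplit : ∑ i, Φ.mulVec h01 i * Φ.mulVec (rst T v) i
        = ∑ i, Φ.mulVec h0 i * Φ.mulVec (rst T v) i
          + ∑ i, Φ.mulVec v1 i * Φ.mulVec (rst T v) i := by
      rw [← Finset.sum_add_distrib]
      refine Finset.sum_congr rfl fun i _ => ?_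
      rw [hh01, Matrix.mulVec_add]
      simp only [Pi.add_apply]
      ring
    have h1 := (abs_le.1 hb0).1
    have h2 := (abs_le.1 hb1).1
    rw [hsplit]
    nlinarith only [h1, h2, hb0, hb1, l2norm_nonneg (rst T v)]
  have hsumcross : -(δ * (l2norm h0 + l2norm v1)) * Sig
      ≤ (l.map (fun T => ∑ i, Φ.mulVec h01 i * Φ.mulVec (rst T v) i)).sum := by
    rw [hSig, ← list_sum_map_const_mul]
    exact list_sum_map_le l _ _ hcross
  -- the main inequality
  have hdotfull : ∑ i, Φ.mulVec h01 i * Φ.mulVec h i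
      ≤ Real.sqrt (1 + δ) * X * (2 * ε) := by
    calc ∑ i, Φ.mulVec h01 i * Φ.mulVec h i
        ≤ |∑ i, Φ.mulVec h01 i * Φ.mulVec h i| := le_abs_self _
      _ ≤ l2norm (Φ.mulVec h01) * l2norm (Φ.mulVec h) := abs_dot_le _ _
      _ ≤ (Real.sqrt (1 + δ) * X) * (2 * ε) := by
          apply mul_le_mul hup hΦh (l2norm_nonneg _)
          positivity
  have hmain : (1 - δ) * X ^ 2
      ≤ Real.sqrt (1 + δ) * X * (2 * ε) + δ * (Real.sqrt 2 * X) * Sig := by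
    have h1 : l2norm (Φ.mulVec h01) ^ 2
        ≤ Real.sqrt (1 + δ) * X * (2 * ε) + δ * (l2norm h0 + l2norm v1) * Sig := by
      nlinarith only [hinner, hsumcross, hdotfull]
    have h2 : δ * (l2norm h0 + l2norm v1) * Sig ≤ δ * (Real.sqrt 2 * X) * Sig := by
      apply mul_le_mul_of_nonneg_right _ hSig0
      exact mul_le_mul_of_nonneg_left hab2 (le_of_lt hδpos)
    calc (1 - δ) * X ^ 2 ≤ l2norm (Φ.mulVec h01) ^ 2 := hlow
      _ ≤ _ := by linarith only [h1, h2]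
  -- cancel X
  have hXle : X ≤ α * ε + ρ * Sig := by
    rcases eq_or_lt_of_le hX0 with heq | hXpos
    · rw [← heq]; positivity
    · have hlin : (1 - δ) * X ≤ 2 * Real.sqrt (1 + δ) * ε + Real.sqrt 2 * δ * Sig := by
        nlinarith only [hmain, hXpos]
      rw [hα, hρ]
      rw [div_mul_eq_mul_div, div_mul_eq_mul_div, ← add_div, le_div_iff₀ h1δ]
      nlinarith only [hlin]
  -- conclude
  have hSigX : Sig ≤ X + 2 * E := by linarith only [hSigbound, hh0X]
  have hXfin : (1 - ρ) * X ≤ α * ε + 2 * ρ * E := by nlinarith only [hXle, hSigX, hρpos]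
  have hhfin : l2norm h ≤ 2 * X + 2 * E := by
    calc l2norm h = l2norm (h01 + rest) := by rw [← hhdec]
      _ ≤ l2norm h01 + l2norm rest := l2norm_add_le _ _
      _ ≤ X + Sig := by rw [hX]; linarith only [hrest2]
      _ ≤ 2 * X + 2 * E := by linarith only [hSigX]
  have hfinal : l2norm h ≤ (2 * α * ε + (2 + 2 * ρ) * E) / (1 - ρ) := by
    rw [le_div_iff₀ h1ρ]
    nlinarith only [hhfin, hXfin, h1ρ, hE0, hX0]
  have heqc : (2 * α * ε + (2 + 2 * ρ) * E) / (1 - ρ)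
      = (2 + 4 * ρ / (1 - ρ)) * E + (2 * α / (1 - ρ)) * ε := by
    field_simp
    ring
  have hgoal : l2norm h ≤ (2 + 4 * ρ / (1 - ρ)) * E + (2 * α / (1 - ρ)) * ε := by
    rw [← heqc]; exact hfinal
  have hEeq : (2 + 4 * ρ / (1 - ρ)) * (Real.sqrt k)⁻¹ * l1norm (x - xk)
      = (2 + 4 * ρ / (1 - ρ)) * E := by
    rw [mul_assoc, ← hE]
  rw [hEeq]
  linarith only [hgoal]
end
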